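/- arXiv:1908.05594 — 6 statements merged into one kernel-verified Lean document; each statement's English description precedes it below -/
import Mathlib

section
/- Let p ≥ 5 be a prime and let a and k be integers such that 1 ≤ a ≤ p-1 and 2 ≤ k ≤ ap-2. If k ≡ ε_k (mod p-1), where ε_k = 0 if k is even and ε_k = 1 if k is odd, then v_p(s(ap, ap-k)) = (v_p(k)+1)·ε_k. -/
/-- The (unsigned) Stirling number of the first kind `s(n,k)`, defined by
`x(x+1)(x+2)⋯(x+n-1) = Σ_{k=0}^{n} s(n,k) x^k`. -/
noncomputable def stirlingFirst (n k : ℕ) : ℕ := (ascPochhammer ℕ n).coeff k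

open Polynomial Finset

noncomputable def gP (R : Type*) [CommRing R] (N : ℕ) : R[X] :=
  ∏ j ∈ range (N - 1), (X + C ((j + 1 : ℕ) : R))

lemma asc_eq_prod (R : Type*) [CommRing R] (n : ℕ) :
    ascPochhammer R n = ∏ j ∈ range n, (X + C (j : R)) := by
  induction n with
  | zero => simp
  | succ n ih =>
    rw [ascPochhammer_succ_right, ih, prod_range_succ, ← C_eq_natCast]

lemma asc_eq_X_mul_g (R : Type*) [CommRing R] (N : ℕ) (h1 : 1 ≤ N) :
    ascPochhammer R N = X * gP R N := by
  obtain ⟨M, rfl⟩ : ∃ M, N = M + 1 := ⟨N - 1, by omega⟩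
  rw [asc_eq_prod, prod_range_succ', gP]
  simp [mul_comm]

lemma coeff_gP (R : Type*) [CommRing R] (N m : ℕ) (h1 : 1 ≤ N) :
    (gP R N).coeff m = ((ascPochhammer ℕ N).coeff (m + 1) : R) := by
  have h := asc_eq_X_mul_g R N h1
  have : (ascPochhammer R N).coeff (m+1) = (gP R N).coeff m := by
    rw [h, coeff_X_mul]
  rw [← this, ← ascPochhammer_map (algebraMap ℕ R), coeff_map]
  simp

variable {R : Type*} [CommRing R]

lemma coeff_comp_neg_X (f : R[X]) (m : ℕ) : (f.comp (-X)).coeff m = (-1)^m * f.coeff m := by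
  induction f using Polynomial.induction_on' with
  | add p q hp hq => simp [add_comp, hp, hq, mul_add]
  | monomial n a =>
    rw [← C_mul_X_pow_eq_monomial, mul_comp, C_comp, pow_comp, X_comp]
    have hc : (-X : R[X])^n = C ((-1:R)^n) * X^n := by
      rw [neg_pow, C_pow, C_neg, C_1]
    rw [hc, coeff_C_mul, coeff_C_mul, coeff_C_mul, coeff_X_pow]
    rcases eq_or_ne n m with rfl | h
    · ring
    · simp [if_neg (Ne.symm h)]

lemma eval_trunc (q : R[X]) (x : R) (hx : x ^ 3 = 0) :
    q.eval x = q.coeff 0 + q.coeff 1 * x + q.coeff 2 * x ^ 2 := by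
  have h : ∀ r : R[X], r.eval x = (r.divX).eval x * x + r.coeff 0 := by
    intro r
    conv_lhs => rw [← divX_mul_X_add r]
    simp
  rw [h q, h q.divX, h q.divX.divX, coeff_divX, coeff_divX, coeff_divX]
  linear_combination (q.divX.divX.divX.eval x) * hx

variable {R : Type*} [CommRing R]

lemma g_reflect (N : ℕ) (h1 : 1 ≤ N) :
    (gP R N).comp (-(X + C (N : R))) = C ((-1:R)^(N-1)) * gP R N := by
  rw [gP, Polynomial.prod_comp]
  have step : ∀ j ∈ range (N-1),
      (X + C ((j + 1 : ℕ) : R)).comp (-(X + C (N : R)))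
        = (-1) * (X + C (((N - 1 - j) : ℕ) : R)) := by
    intro j hj
    rw [mem_range] at hj
    rw [add_comp, X_comp, C_comp]
    obtain ⟨d, hd⟩ : ∃ d, N - 1 - j = d := ⟨_, rfl⟩
    have h3 : d + (j + 1) = N := by omega
    have h2 : ((d : ℕ) : R) = (N : R) - ((j+1 : ℕ) : R) := by
      rw [← h3]; push_cast; ring
    rw [hd, h2, map_sub]
    ring
  rw [prod_congr rfl step, prod_mul_distrib, prod_const]
  congr 1
  · simp
  · have step2 : ∀ j ∈ range (N-1),
        (X + C (((N - 1 - j) : ℕ) : R)) = X + C (((N - 1 - 1 - j) + 1 : ℕ) : R) := by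
      intro j hj
      rw [mem_range] at hj
      rw [show N - 1 - j = (N - 1 - 1 - j) + 1 from by omega]
    rw [prod_congr rfl step2, prod_range_reflect (fun j => X + C ((j + 1 : ℕ) : R)) (N-1)]

variable {R : Type*} [CommRing R]

lemma key (N m : ℕ) (h1 : 1 ≤ N) (hx : ((N:R))^3 = 0) :
    (-1:R)^(N-1) * (gP R N).coeff m
      = (-1)^m * (gP R N).coeff m
        + (N:R) * ((m+1 : ℕ) : R) * ((-1)^(m+1) * (gP R N).coeff (m+1))
        + (N:R)^2 * (((m+2).choose 2 : ℕ) : R) * ((-1)^m * (gP R N).coeff (m+2)) := by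
  have hassoc : ((gP R N).comp (-X)).comp (X + C (N:R)) = (gP R N).comp (-(X + C (N:R))) := by
    rw [comp_assoc]
    congr 1
    rw [neg_comp, X_comp]
  have htay : (Polynomial.taylor (N:R) ((gP R N).comp (-X))) = C ((-1:R)^(N-1)) * gP R N := by
    rw [taylor_apply, hassoc, g_reflect N h1]
  have hL : (Polynomial.taylor (N:R) ((gP R N).comp (-X))).coeff m
      = (-1:R)^(N-1) * (gP R N).coeff m := by
    rw [htay, coeff_C_mul]
  rw [taylor_coeff, eval_trunc _ _ hx] at hL
  rw [← hL]
  rw [hasseDeriv_coeff, hasseDeriv_coeff, hasseDeriv_coeff]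
  rw [coeff_comp_neg_X, coeff_comp_neg_X, coeff_comp_neg_X]
  have e1 : (0 + m).choose m = 1 := by simp
  have e2 : (1 + m).choose m = m + 1 := by
    rw [add_comm, Nat.choose_succ_self_right]
  have e3 : (2 + m).choose m = (m+2).choose 2 := by
    rw [add_comm, show m = (m+2) - 2 from by omega]
    exact Nat.choose_symm (by omega)
  rw [e1, e2, e3]
  push_cast
  ring_nf

lemma prodP (p : ℕ) [Fact p.Prime] :
    ∏ r ∈ range p, (X + C ((r : ℕ) : ZMod p)) = X^p - X := by
  have hp1 : 1 < p := (Fact.out : p.Prime).one_lt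
  have hcard : Fintype.card (ZMod p) = p := ZMod.card p
  -- step 1: reindex range p to univ
  have h1 : ∏ r ∈ range p, (X + C ((r : ℕ) : ZMod p)) = ∏ b : ZMod p, (X + C b) := by
    apply Finset.prod_nbij' (fun r => ((r : ℕ) : ZMod p)) (fun b => b.val)
    · intro r _; exact mem_univ _
    · intro b _; rw [mem_range]; exact ZMod.val_lt b
    · intro r hr; rw [mem_range] at hr; exact ZMod.val_cast_of_lt hr
    · intro b _; exact ZMod.natCast_zmod_val b
    · intro r _; rfl
  rw [h1]
  -- step 2: reindex by negation
  have h2 : ∏ b : ZMod p, (X + C b) = ∏ b : ZMod p, (X - C b) := by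
    apply Fintype.prod_equiv (Equiv.neg (ZMod p))
    intro b
    simp [Equiv.neg_apply, sub_neg_eq_add]
  rw [h2]
  -- step 3: product of X - C over roots
  have hmonic : (X^p - X : (ZMod p)[X]).Monic := by
    apply monic_X_pow_sub
    simpa using hp1
  have hroots : (X^p - X : (ZMod p)[X]).roots = Finset.univ.val := by
    have := FiniteField.roots_X_pow_card_sub_X (ZMod p)
    rwa [hcard] at this
  have hdeg : (X^p - X : (ZMod p)[X]).natDegree = p :=
    FiniteField.X_pow_card_sub_X_natDegree_eq _ hp1
  have := prod_multiset_X_sub_C_of_monic_of_roots_card_eq hmonic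
    (by rw [hroots, hdeg]; simpa using hcard)
  rw [hroots] at this
  rw [← this]
  rfl

lemma asc_mod_p (p : ℕ) [Fact p.Prime] (a : ℕ) :
    ascPochhammer (ZMod p) (a * p) = (X^p - X)^a := by
  rw [asc_eq_prod]
  induction a with
  | zero => simp
  | succ b ih =>
    rw [show (b+1)*p = b*p + p from by ring, prod_range_add, ih, pow_succ]
    congr 1
    rw [← prodP p]
    apply Finset.prod_congr rfl
    intro r _
    congr 1
    push_cast
    simp [ZMod.natCast_self]

lemma evenCase (p a k : ℕ) [Fact p.Prime] (ha1 : 1 ≤ a) (ha : a < p)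
    (hdvd : (p-1) ∣ k) (hk : k + 2 ≤ a * p) :
    ¬ (p ∣ stirlingFirst (a * p) (a * p - k)) := by
  have hp : p.Prime := Fact.out
  have hp5 : 2 ≤ p := hp.two_le
  obtain ⟨i, hi⟩ := hdvd
  have hia : i ≤ a := by
    by_contra hc
    push_neg at hc
    have h1 : (a+1) * (p-1) ≤ k := by
      rw [hi, mul_comm]
      exact Nat.mul_le_mul_left _ hc
    have h2 : a * p ≤ (a+1)*(p-1) := by
      have hap : a + 1 ≤ p := ha
      zify [show 1 ≤ p from by omega]
      nlinarith
    omega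
  -- the coefficient mod p
  have hcast : ((stirlingFirst (a*p) (a*p - k) : ℕ) : ZMod p)
      = (ascPochhammer (ZMod p) (a*p)).coeff (a*p - k) := by
    rw [← ascPochhammer_map (algebraMap ℕ (ZMod p)), coeff_map, stirlingFirst]
    simp
  intro hdvdp
  have h0 : ((stirlingFirst (a*p) (a*p - k) : ℕ) : ZMod p) = 0 := by
    rw [ZMod.natCast_eq_zero_iff]
    exact hdvdp
  rw [hcast, asc_mod_p] at h0
  -- rewrite (X^p - X)^a
  have hE : (X^p - X : (ZMod p)[X])^a
      = X^a * Polynomial.expand (ZMod p) (p-1) ((X - 1)^a) := by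
    have step : (X^p - X : (ZMod p)[X]) = X * Polynomial.expand (ZMod p) (p-1) (X - 1) := by
      rw [map_sub, Polynomial.expand_X, map_one, mul_sub, mul_one, ← pow_succ',
        Nat.sub_add_cancel (by omega : 1 ≤ p)]
    rw [step, mul_pow, map_pow]
  rw [hE] at h0
  have hd : a*p - k = (a-i)*(p-1) + a := by
    subst hi
    zify [show (p-1)*i ≤ a*p from by omega, hia, show 1 ≤ p from by omega]
    ring
  rw [hd, coeff_X_pow_mul, coeff_expand (by omega : 0 < p - 1),
    if_pos (Dvd.intro_left _ rfl), Nat.mul_div_cancel _ (by omega : 0 < p - 1)] at h0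
  have hx1 : (X - 1 : (ZMod p)[X]) = X + C (-1) := by
    rw [map_neg, map_one]; ring
  rw [hx1, coeff_X_add_C_pow, show a - (a - i) = i from by omega] at h0
  -- now h0 : (-1)^i * (a.choose (a-i)) = 0 in ZMod p
  have hu : IsUnit ((-1 : ZMod p)^i) := (IsUnit.neg isUnit_one).pow i
  have hch : ((a.choose (a-i) : ℕ) : ZMod p) = 0 := by
    have := congrArg (fun z => ((-1 : ZMod p)^i)⁻¹ * z) h0
    simp only [mul_zero] at this
    rw [← mul_assoc, ZMod.inv_mul_of_unit _ hu, one_mul] at this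
    exact this
  rw [ZMod.natCast_eq_zero_iff] at hch
  have hfac : p ∣ a.factorial := by
    have h1 : a.choose (a-i) ∣ a.factorial := by
      have h2 := Nat.choose_mul_factorial_mul_factorial (show a - i ≤ a from by omega)
      exact ⟨(a-i).factorial * (a - (a-i)).factorial, by rw [← h2]; ring⟩
    exact dvd_trans hch h1
  rw [Nat.Prime.dvd_factorial hp] at hfac
  omega

lemma oddKey (p N k : ℕ) (hk1 : k + 1 ≤ N) (h1N : 1 ≤ N) (hodd : Odd k) (hpN : p ∣ N) :
    ((p:ℤ))^3 ∣ (2 * (stirlingFirst N (N-k) : ℤ)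
      - ((N : ℤ) - k) * N * (stirlingFirst N (N-k+1) : ℤ)
      + (((N-k+1).choose 2 : ℕ) : ℤ) * (N:ℤ)^2 * (stirlingFirst N (N-k+2) : ℤ)) := by
  set R := ZMod (p^3)
  have hx : ((N : R))^3 = 0 := by
    obtain ⟨b, rfl⟩ := hpN
    show ((p * b : ℕ) : ZMod (p^3))^3 = 0
    push_cast
    rw [mul_pow, show ((p:ZMod (p^3)))^3 = ((p^3 : ℕ) : ZMod (p^3)) from by push_cast; ring, ZMod.natCast_self]
    ring
  obtain ⟨m, hm⟩ : ∃ m, N - 1 - k = m := ⟨_, rfl⟩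
  have hm1 : m + 1 = N - k := by omega
  have hm2 : m + 2 = N - k + 1 := by omega
  have hm3 : m + 3 = N - k + 2 := by omega
  have hN1 : N - 1 = m + k := by omega
  have h := key N m h1N hx (R := R)
  have hpar : (-1:R)^(N-1) = -(-1:R)^m := by
    rw [hN1, pow_add, hodd.neg_one_pow]
    ring
  rw [hpar] at h
  simp only [pow_succ] at h
  have hsq : (-1:R)^m * (-1:R)^m = 1 := by
    rw [← pow_add, ← two_mul, pow_mul]
    norm_num
  set G0 := (gP R N).coeff m
  set G1 := (gP R N).coeff (m+1)
  set G2 := (gP R N).coeff (m+2)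
  have h2 : 2*G0 - ((m+1:ℕ):R) * (N:R) * G1 + (((m+2).choose 2 : ℕ):R) * (N:R)^2 * G2 = 0 := by
    linear_combination (-(-1:R)^m) * h +
      (-(2*G0 - ((m+1:ℕ):R) * (N:R) * G1 + (((m+2).choose 2 : ℕ):R) * (N:R)^2 * G2)) * hsq
  -- now convert to the ℤ statement
  have c0 : G0 = ((stirlingFirst N (N-k) : ℕ) : R) := by
    rw [show G0 = (gP R N).coeff m from rfl, coeff_gP R N m h1N, stirlingFirst, hm1]
  have c1 : G1 = ((stirlingFirst N (N-k+1) : ℕ) : R) := by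
    rw [show G1 = (gP R N).coeff (m+1) from rfl, coeff_gP R N (m+1) h1N, stirlingFirst, hm2]
  have c2 : G2 = ((stirlingFirst N (N-k+2) : ℕ) : R) := by
    rw [show G2 = (gP R N).coeff (m+2) from rfl, coeff_gP R N (m+2) h1N, stirlingFirst,
      show m + 2 + 1 = N - k + 2 from by omega]
  have cNk : ((m+1 : ℕ) : R) = (N:R) - (k:R) := by
    rw [hm1, Nat.cast_sub (by omega)]
  rw [show ((p:ℤ))^3 = ((p^3 : ℕ) : ℤ) from by push_cast; ring,
    ← ZMod.intCast_zmod_eq_zero_iff_dvd]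
  push_cast
  rw [← c0, ← c1, ← c2, ← cNk, ← hm2]
  linear_combination h2

lemma padicValNat_eq_of_dvd_not_dvd {p v n : ℕ} [Fact p.Prime] (h1 : p^v ∣ n)
    (h2 : ¬ p^(v+1) ∣ n) : padicValNat p n = v := by
  have hn : n ≠ 0 := by rintro rfl; exact h2 (dvd_zero _)
  have hle : v ≤ padicValNat p n := (padicValNat_dvd_iff_le hn).mp h1
  have hlt : ¬ (v + 1 ≤ padicValNat p n) := fun hc => h2 ((padicValNat_dvd_iff_le hn).mpr hc)
  omega

theorem stmt0 (p a k : ℕ) (hp : p.Prime) (hp5 : 5 ≤ p)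
    (ha1 : 1 ≤ a) (ha : a ≤ p - 1) (hk2 : 2 ≤ k) (hk : k ≤ a * p - 2)
    (hcong : k ≡ (if Even k then 0 else 1) [MOD p - 1]) :
    padicValNat p (stirlingFirst (a * p) (a * p - k)) =
      (padicValNat p k + 1) * (if Even k then 0 else 1) := by
  haveI : Fact p.Prime := ⟨hp⟩
  have hap : a < p := by omega
  have hpN : p ≤ a * p := Nat.le_mul_of_pos_left p (by omega)
  have hkap : k + 2 ≤ a * p := by omega
  by_cases hev : Even k
  · rw [if_pos hev] at hcong ⊢
    rw [mul_zero]
    have hdvd : (p - 1) ∣ k := (Nat.modEq_zero_iff_dvd).mp hcong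
    exact padicValNat.eq_zero_of_not_dvd (evenCase p a k ha1 hap hdvd hkap)
  · rw [if_neg hev] at hcong ⊢
    rw [mul_one]
    have hodd : Odd k := Nat.not_even_iff_odd.mp hev
    have hk3 : 3 ≤ k := by rcases hodd with ⟨t, ht⟩; omega
    have hdvd1 : (p - 1) ∣ (k - 1) := (Nat.modEq_iff_dvd' (by omega)).mp hcong.symm
    have hS1 : ¬ p ∣ stirlingFirst (a*p) (a*p - k + 1) := by
      have := evenCase p a (k-1) ha1 hap hdvd1 (by omega)
      rwa [show a*p - (k-1) = a*p - k + 1 from by omega] at this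
    have hkpp : k < p * p := by
      calc k < a * p := by omega
      _ ≤ (p-1) * p := Nat.mul_le_mul_right _ ha
      _ < p * p := (Nat.mul_lt_mul_right (show 0 < p from by omega)).mpr (by omega)
    -- abstract N
    obtain ⟨N, hN⟩ : ∃ N, a * p = N := ⟨_, rfl⟩
    rw [hN] at hkap hk hpN hS1 ⊢
    have hpdvdN : p ∣ N := ⟨a, by rw [← hN]; ring⟩
    have hD := oddKey p N k (by omega) (by omega) hodd hpdvdN
    have hpa : ¬ p ∣ a := fun h => absurd (Nat.le_of_dvd (by omega) h) (by omega)
    set S0 := stirlingFirst N (N - k) with hS0def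
    set S1 := stirlingFirst N (N - k + 1) with hS1def
    set S2 := stirlingFirst N (N - k + 2) with hS2def
    set c := (N - k + 1).choose 2 with hcdef
    obtain ⟨t, ht⟩ := hD
    have hteq : 2 * (S0:ℤ) = ((N : ℤ) - k) * N * S1 + (p:ℤ)^3 * t - (c:ℤ) * (N:ℤ)^2 * S2 := by
      linarith [ht]
    have hNZ : (N:ℤ) = (a:ℤ) * p := by rw [← hN]; push_cast; ring
    have hpZ0 : (p:ℤ) ≠ 0 := by positivity
    have hcop2 : Nat.Coprime p 2 := (Nat.coprime_primes hp Nat.prime_two).mpr (by omega)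
    have dN : (p:ℤ) ∣ (N:ℤ) := by rw [hNZ]; exact ⟨a, mul_comm _ _⟩
    have hcopaS1 : Nat.Coprime p (a * S1) :=
      Nat.Coprime.mul_right ((Nat.Prime.coprime_iff_not_dvd hp).mpr hpa)
        ((Nat.Prime.coprime_iff_not_dvd hp).mpr hS1)
    by_cases hpk : p ∣ k
    · -- v_p(k) = 1, answer 2
      have hkval : padicValNat p k = 1 := by
        apply padicValNat_eq_of_dvd_not_dvd (by simpa using hpk)
        intro h2
        have hle2 := Nat.le_of_dvd (by omega) h2
        have hsq : p^(1+1) = p*p := by ring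
        omega
      rw [hkval]
      have dNk : (p:ℤ) ∣ ((N:ℤ) - k) := dvd_sub dN (Int.natCast_dvd_natCast.mpr hpk)
      apply padicValNat_eq_of_dvd_not_dvd
      · -- p^2 ∣ S0
        have hz : (p:ℤ)^2 ∣ 2 * (S0:ℤ) := by
          rw [hteq]
          refine dvd_sub (dvd_add ?_ ?_) ?_
          · rw [sq]; exact (mul_dvd_mul dNk dN).mul_right _
          · exact (pow_dvd_pow _ (by omega)).mul_right _
          · exact ((pow_dvd_pow_of_dvd dN 2).mul_left _).mul_right _
        have hn2 : p^2 ∣ 2 * S0 := by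
          rw [← Int.natCast_dvd_natCast]; push_cast; exact hz
        exact (Nat.Coprime.pow_left 2 hcop2).dvd_of_dvd_mul_left hn2
      · -- ¬ p^3 ∣ S0
        intro hcon
        have hz3 : (p:ℤ)^3 ∣ 2 * (S0:ℤ) := by
          have := Int.natCast_dvd_natCast.mpr hcon
          push_cast at this
          exact this.mul_left 2
        -- p ∣ c
        have hpNk : p ∣ N - k := Nat.dvd_sub hpdvdN hpk
        have h2c : 2 * c = (N - k + 1) * (N - k) := by
          rw [hcdef, Nat.choose_two_right, show N - k + 1 - 1 = N - k from by omega]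
          rw [mul_comm 2]
          apply Nat.div_mul_cancel
          have := Nat.even_mul_succ_self (N - k)
          rcases this with ⟨u, hu⟩
          exact ⟨u, by rw [mul_comm (N - k + 1)]; omega⟩
        have hpc : p ∣ c := by
          have h6 : p ∣ 2 * c := by
            rw [h2c]
            exact Dvd.dvd.mul_left hpNk _
          exact hcop2.dvd_of_dvd_mul_left h6
        -- p^3 divides the first term
        have hterm1 : (p:ℤ)^3 ∣ ((N : ℤ) - k) * N * S1 := by
          have : ((N : ℤ) - k) * N * S1 = (2 * S0 - (p:ℤ)^3 * t + (c:ℤ) * (N:ℤ)^2 * S2) := by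
            linarith [hteq]
          rw [this]
          refine dvd_add (dvd_sub hz3 (Dvd.intro _ rfl)) ?_
          rw [show (3:ℕ) = 1 + 2 from rfl, pow_add, pow_one]
          exact (mul_dvd_mul (Int.natCast_dvd_natCast.mpr hpc)
            (pow_dvd_pow_of_dvd dN 2)).mul_right _
        -- cancel one factor of p
        have hcan : (p:ℤ)^2 ∣ ((N : ℤ) - k) * a * S1 := by
          have hre : ((N : ℤ) - k) * N * S1 = (((N : ℤ) - k) * a * S1) * p := by
            rw [hNZ]; ring
          have : (p:ℤ)^2 * p ∣ (((N : ℤ) - k) * a * S1) * p := by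
            rw [← hre, show (p:ℤ)^2 * p = (p:ℤ)^3 from by ring]
            exact hterm1
          exact (mul_dvd_mul_iff_right hpZ0).mp this
        have hnat : p^2 ∣ (N - k) * (a * S1) := by
          rw [← Int.natCast_dvd_natCast]
          push_cast [Nat.cast_sub (show k ≤ N from by omega)]
          rw [← mul_assoc]
          exact hcan
        have hdNk2 : p^2 ∣ N - k := (Nat.Coprime.pow_left 2 hcopaS1).dvd_of_dvd_mul_right hnat
        -- contradiction: v_p(N-k) = 1
        obtain ⟨k', rfl⟩ := hpk
        have hk'a : k' < a := by
          by_contra hc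
          push_neg at hc
          have hq1 : a * p ≤ k' * p := Nat.mul_le_mul_right _ hc
          rw [hN] at hq1
          have hq2 : p * k' = k' * p := mul_comm p k'
          omega
        have hNk' : N - p * k' = p * (a - k') := by
          rw [← hN, Nat.mul_sub, mul_comm a p]
        rw [hNk'] at hdNk2
        have : p ∣ a - k' := by
          have := (mul_dvd_mul_iff_left (show p ≠ 0 from by omega)).mp
            (by rw [← sq]; exact hdNk2 : p * p ∣ p * (a - k'))
          exact this
        have := Nat.le_of_dvd (by omega) this
        omega
    · -- v_p(k) = 0, answer 1
      have hkval : padicValNat p k = 0 := padicValNat.eq_zero_of_not_dvd hpk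
      rw [hkval]
      apply padicValNat_eq_of_dvd_not_dvd
      · -- p ∣ S0
        have hz : (p:ℤ) ∣ 2 * (S0:ℤ) := by
          rw [hteq]
          refine dvd_sub (dvd_add ?_ ?_) ?_
          · exact (dN.mul_left _).mul_right _
          · exact ((dvd_pow_self (p:ℤ) (by omega)).mul_right _)
          · exact (((dvd_pow dN (by omega)).mul_left _).mul_right _)
        have hn2 : p ∣ 2 * S0 := by
          rw [← Int.natCast_dvd_natCast]; push_cast; exact hz
        have := hcop2.dvd_of_dvd_mul_left hn2
        simpa using this
      · -- ¬ p^2 ∣ S0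
        intro hcon
        have hz2 : (p:ℤ)^2 ∣ 2 * (S0:ℤ) := by
          have := Int.natCast_dvd_natCast.mpr hcon
          push_cast at this
          exact this.mul_left 2
        have hterm1 : (p:ℤ)^2 ∣ ((N : ℤ) - k) * N * S1 := by
          have hre : ((N : ℤ) - k) * N * S1 = (2 * S0 - (p:ℤ)^3 * t + (c:ℤ) * (N:ℤ)^2 * S2) := by
            linarith [hteq]
          rw [hre]
          refine dvd_add (dvd_sub hz2 ?_) ?_
          · exact (pow_dvd_pow _ (by omega)).mul_right _
          · exact ((pow_dvd_pow_of_dvd dN 2).mul_left _).mul_right _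
        have hcan : (p:ℤ) ∣ ((N : ℤ) - k) * a * S1 := by
          have hre : ((N : ℤ) - k) * N * S1 = (((N : ℤ) - k) * a * S1) * p := by
            rw [hNZ]; ring
          have h2 : (p:ℤ) * p ∣ (((N : ℤ) - k) * a * S1) * p := by
            rw [← hre, ← sq]
            exact hterm1
          exact (mul_dvd_mul_iff_right hpZ0).mp h2
        have hnat : p ∣ (N - k) * (a * S1) := by
          rw [← Int.natCast_dvd_natCast]
          push_cast [Nat.cast_sub (show k ≤ N from by omega)]
          rw [← mul_assoc]
          exact hcan
        have hdNk : p ∣ N - k := hcopaS1.dvd_of_dvd_mul_right hnat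
        have : p ∣ k := by
          have h5 := Nat.dvd_sub hpdvdN hdNk
          rwa [show N - (N - k) = k from by omega] at h5
        exact hpk this
end

section
/- Let p ≥ 5 be a prime and let a and k be integers such that 4 ≤ a ≤ p-1 and a(p-1)+2 ≤ k ≤ ap-2. Then v_p(s(ap, ap-k)) ≥ a + k - ap. -/
open Polynomial

/-- Multiplication step: if every coefficient `m` of `P` is divisible by `p^(a-m)`
and the constant coefficient of `Q` is divisible by `p`, then every coefficient `m`
of `P * Q` is divisible by `p^(a+1-m)`. -/
lemma coeff_mul_dvd_step (p : ℕ) (a : ℕ) (P Q : Polynomial ℤ)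
    (hP : ∀ m, (p : ℤ) ^ (a - m) ∣ P.coeff m) (hQ : (p : ℤ) ∣ Q.coeff 0) :
    ∀ m, (p : ℤ) ^ (a + 1 - m) ∣ (P * Q).coeff m := by
  intro m
  rw [Polynomial.coeff_mul]
  apply Finset.dvd_sum
  rintro ⟨j, l⟩ hjl
  rw [Finset.HasAntidiagonal.mem_antidiagonal] at hjl
  rcases Nat.eq_zero_or_pos l with hl | hl
  · subst hl
    simp only at hjl
    subst hjl
    calc (p : ℤ) ^ (a + 1 - j) ∣ (p : ℤ) ^ (a - j) * (p : ℤ) ^ 1 := by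
          rw [← pow_add]; exact pow_dvd_pow _ (by omega)
      _ ∣ P.coeff j * Q.coeff 0 := mul_dvd_mul (hP j) (by simpa using hQ)
  · apply dvd_mul_of_dvd_left
    exact dvd_trans (pow_dvd_pow _ (by omega : a + 1 - m ≤ a - j)) (hP j)

/-- The constant term of the shifted block `(ascPochhammer ℤ p).comp (X + c·p)`
is divisible by `p`. -/
lemma block_const_dvd (p : ℕ) (hp : 0 < p) (c : ℕ) :
    (p : ℤ) ∣ ((ascPochhammer ℤ p).comp (Polynomial.X + ((c * p : ℕ) : Polynomial ℤ))).coeff 0 := by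
  rw [Polynomial.coeff_zero_eq_eval_zero, Polynomial.eval_comp]
  have h0 : ((Polynomial.X + ((c * p : ℕ) : Polynomial ℤ)).eval 0 : ℤ) = (c * p : ℕ) := by
    simp
  rw [h0]
  obtain ⟨q, rfl⟩ := Nat.exists_eq_succ_of_ne_zero hp.ne'
  rw [ascPochhammer_succ_left]
  rw [Polynomial.eval_mul, Polynomial.eval_X]
  exact dvd_mul_of_dvd_left (Int.natCast_dvd_natCast.mpr (Dvd.intro_left c rfl)) _

/-- Key divisibility: `p^(a-m) ∣ coeff m (ascPochhammer ℤ (a*p))`. -/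
lemma key_dvd (p : ℕ) (hp : 0 < p) :
    ∀ a m : ℕ, (p : ℤ) ^ (a - m) ∣ (ascPochhammer ℤ (a * p)).coeff m := by
  intro a
  induction a with
  | zero => intro m; simpa using dvd_refl _
  | succ c ih =>
    intro m
    have hmul := ascPochhammer_mul (S := ℤ) (c * p) p
    have hn : c * p + p = (c + 1) * p := by ring
    rw [hn] at hmul
    rw [← hmul]
    exact coeff_mul_dvd_step p c _ _ ih (block_const_dvd p hp c) m

/-- Positivity of unsigned Stirling numbers of the first kind. -/
lemma ascPochhammer_coeff_pos : ∀ n m : ℕ, 1 ≤ m → m ≤ n → 0 < (ascPochhammer ℕ n).coeff m := by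
  intro n
  induction n with
  | zero => intro m h1 h2; omega
  | succ c ih =>
    intro m h1 h2
    rw [ascPochhammer_succ_right]
    rw [mul_add, Polynomial.coeff_add]
    obtain ⟨m', rfl⟩ := Nat.exists_eq_succ_of_ne_zero (by omega : m ≠ 0)
    rw [Polynomial.coeff_mul_X]
    rcases Nat.eq_zero_or_pos m' with hm' | hm'
    · subst hm'
      rcases Nat.eq_zero_or_pos c with hc | hc
      · subst hc
        simp
      · have h := ih 1 le_rfl hc
        have : 0 < ((ascPochhammer ℕ c) * (c : Polynomial ℕ)).coeff 1 := by
          rw [← Polynomial.C_eq_natCast, Polynomial.coeff_mul_C]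
          exact Nat.mul_pos h hc
        exact Nat.lt_of_lt_of_le this (Nat.le_add_left _ _)
    · have h := ih m' hm' (by omega)
      exact Nat.lt_of_lt_of_le h (Nat.le_add_right _ _)

theorem stmt3 (p a k : ℕ) (hp : p.Prime) (hp5 : 5 ≤ p)
    (ha4 : 4 ≤ a) (ha : a ≤ p - 1)
    (hk1 : a * (p - 1) + 2 ≤ k) (hk2 : k ≤ a * p - 2) :
    (padicValNat p (stirlingFirst (a * p) (a * p - k)) : ℤ) ≥
      (a : ℤ) + (k : ℤ) - (a : ℤ) * (p : ℤ) := by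
  haveI : Fact p.Prime := ⟨hp⟩
  set m := a * p - k with hm
  -- basic arithmetic facts
  have hsplit : a * p = a * (p - 1) + a := by
    have : p - 1 + 1 = p := by omega
    calc a * p = a * (p - 1 + 1) := by rw [this]
      _ = a * (p - 1) + a := by ring
  have hm2 : 2 ≤ m := by omega
  have hma : m ≤ a - 2 := by omega
  have hkap : k ≤ a * p := by omega
  -- divisibility over ℕ
  have hdvdZ : (p : ℤ) ^ (a - m) ∣ (ascPochhammer ℤ (a * p)).coeff m :=
    key_dvd p hp.pos a m
  have hcast : (ascPochhammer ℤ (a * p)).coeff m = ((stirlingFirst (a * p) m : ℕ) : ℤ) := by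
    rw [stirlingFirst, ← ascPochhammer_map (Nat.castRingHom ℤ) (a * p),
      Polynomial.coeff_map]
    simp
  rw [hcast] at hdvdZ
  have hdvdN : p ^ (a - m) ∣ stirlingFirst (a * p) m := by
    have := hdvdZ
    rwa [show ((p : ℤ)) ^ (a - m) = ((p ^ (a - m) : ℕ) : ℤ) by push_cast; ring,
      Int.natCast_dvd_natCast] at this
  -- nonzero
  have hpos : 0 < stirlingFirst (a * p) m :=
    ascPochhammer_coeff_pos (a * p) m (by omega) (by omega)
  have hle : a - m ≤ padicValNat p (stirlingFirst (a * p) m) :=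
    (padicValNat_dvd_iff_le hpos.ne').mp hdvdN
  have hle' : ((a - m : ℕ) : ℤ) ≤ (padicValNat p (stirlingFirst (a * p) m) : ℤ) := by
    exact_mod_cast hle
  have heq : ((a - m : ℕ) : ℤ) = (a : ℤ) + (k : ℤ) - (a : ℤ) * (p : ℤ) := by
    have h1 : ((a * p : ℕ) : ℤ) = (a : ℤ) * (p : ℤ) := by push_cast; ring
    have h2 : m = a * p - k := hm
    omega
  omega
end

section
/- Let p ≥ 5 be a prime, let a and n be positive integers with gcd(a,p) = 1, and let k be an odd integer with 1 ≤ k ≤ ap^n - 1. If v_p(s(ap^n, ap^n - k + 1)) ≤ 2n - 1, then v_p(s(ap^n, ap^n - k)) = v_p(s(ap^n, ap^n - k + 1)) + v_p(ap^n - k) + n. -/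
open Polynomial Finset

namespace Stmt6

/-- ascPochhammer as a product -/
lemma asc_eq_prod (R : Type*) [CommRing R] (n : ℕ) :
    ascPochhammer R n = ∏ i ∈ range n, (X + C (i : R)) := by
  induction n with
  | zero => simp [ascPochhammer_zero]
  | succ n ih =>
      rw [ascPochhammer_succ_right, ih, prod_range_succ]
      norm_cast

lemma natCast_dvd_iff_map_eq_zero (N : ℕ) (f : ℤ[X]) :
    ((N : ℤ[X]) ∣ f) ↔ f.map (Int.castRingHom (ZMod N)) = 0 := by
  have h1 : (N : ℤ[X]) = C (N : ℤ) := by simp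
  rw [h1, Polynomial.C_dvd_iff_dvd_coeff]
  constructor
  · intro h
    ext i
    simp only [coeff_map, coeff_zero, Int.coe_castRingHom]
    rw [ZMod.intCast_zmod_eq_zero_iff_dvd]
    exact_mod_cast h i
  · intro h i
    have := Polynomial.ext_iff.mp h i
    simp only [coeff_map, coeff_zero, Int.coe_castRingHom] at this
    rw [ZMod.intCast_zmod_eq_zero_iff_dvd] at this
    exact_mod_cast this

/-- Taylor expansion of composition up to second order. -/
lemma comp_taylor (f : ℤ[X]) (t : ℤ) :
    ∃ E : ℤ[X], f.comp (X + C t) = f + C t * f.derivative + C t ^ 2 * E := by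
  obtain ⟨k, hk⟩ := Polynomial.binomExpansion (f.map (C : ℤ →+* ℤ[X])) X (C t)
  refine ⟨k, ?_⟩
  have h1 : ∀ g : ℤ[X], (g.map (C : ℤ →+* ℤ[X])).eval (X + C t) = g.comp (X + C t) := by
    intro g; rw [Polynomial.eval_map]; rfl
  have h2 : ∀ g : ℤ[X], (g.map (C : ℤ →+* ℤ[X])).eval X = g := by
    intro g; rw [Polynomial.eval_map]; exact Polynomial.eval₂_C_X
  rw [h1] at hk
  rw [Polynomial.derivative_map] at hk
  rw [h2, h2] at hk
  rw [hk]; ring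

lemma prod_block (a b : ℕ) :
    ∏ i ∈ range (a * b), (X + C (i:ℤ)) =
      ∏ c ∈ range a, (∏ r ∈ range b, (X + C (r:ℤ))).comp (X + C ((c*b : ℕ) : ℤ)) := by
  induction a with
  | zero => simp
  | succ a ih =>
      rw [Nat.succ_mul, Finset.prod_range_add, ih, prod_range_succ]
      congr 1
      rw [Polynomial.prod_comp]
      refine Finset.prod_congr rfl fun r hr => ?_
      rw [add_comp, X_comp, C_comp, add_assoc, ← C_add]
      push_cast
      ring_nf

lemma gen_prod (R : Type*) [CommRing R] (B x J : R) (g : ℕ → R) :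
    ∀ N : ℕ, 1 ≤ N → ∃ u v : R,
      ∏ c ∈ range N, (B + (c : R) * x + J * g c)
        = B ^ N + ((∑ c ∈ range N, c : ℕ) : R) * x * B ^ (N - 1) + x ^ 2 * u + J * v := by
  intro N
  induction N with
  | zero => omega
  | succ N ih =>
      intro _
      rcases Nat.eq_zero_or_pos N with h1 | h1
      · subst h1
        refine ⟨0, g 0, ?_⟩
        simp
      · obtain ⟨u, v, huv⟩ := ih h1
        rw [prod_range_succ, huv]
        refine ⟨((∑ c ∈ range N, c : ℕ) : R) * (N:R) * B ^ (N-1) + u * (B + (N:R)*x + J * g N),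
          v * (B + (N:R)*x + J * g N) + (B ^ (N-1) * B + ((∑ c ∈ range N, c : ℕ):R) * x * B^(N-1)) * g N, ?_⟩
        have hsum : ((∑ c ∈ range (N+1), c : ℕ) : R) = ((∑ c ∈ range N, c : ℕ) : R) + (N : R) := by
          rw [Finset.sum_range_succ]; push_cast; ring
        have hBN : B ^ (N-1) * B = B ^ N := by
          conv_rhs => rw [show N = (N-1)+1 by omega]
          rw [pow_succ]
        rw [hsum, Nat.add_sub_cancel,
          show B^(N+1) = B^(N-1)*B*B by rw [hBN, ← pow_succ], ← hBN]
        ring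

noncomputable def FF (p k : ℕ) : ℤ[X] := ∏ i ∈ range (p^k), (X + C (i:ℤ))
noncomputable def GG (p : ℕ) : ℤ[X] := X^p - X

lemma pow_sub_pow_dvd {R : Type*} [CommRing R] (p k : ℕ) (hp : p.Prime) (hk : 1 ≤ k)
    (A B : R) (h : (p:R)^k ∣ A - B) : (p:R)^(k+1) ∣ A^p - B^p := by
  obtain ⟨y, hy⟩ := h
  have hA : A = B + (p:R)^k * y := by linear_combination hy
  rw [hA, add_pow]
  rw [Finset.sum_range_succ]
  simp only [Nat.sub_self, pow_zero, Nat.choose_self, Nat.cast_one, mul_one, one_mul]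
  rw [add_sub_cancel_right]
  apply Finset.dvd_sum
  intro i hi
  rw [Finset.mem_range] at hi
  have h2p := hp.two_le
  by_cases hip : i = p - 1
  · have h1 : p - i = 1 := by omega
    rw [h1, pow_one]
    have hch : (p.choose i : R) = (p : R) := by
      rw [hip, Nat.choose_symm (by omega), Nat.choose_one_right]
    rw [hch]
    exact ⟨B ^ i * y, by ring⟩
  · have h2 : 2 ≤ p - i := by omega
    have hd : ((p:R)^(k+1)) ∣ ((p:R)^k)^(p-i) := by
      rw [← pow_mul]
      apply pow_dvd_pow
      have := Nat.mul_le_mul_left k h2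
      omega
    rw [mul_pow]
    exact Dvd.dvd.mul_right (Dvd.dvd.mul_left (hd.mul_right _) _) _

lemma zmod_prod (p : ℕ) (hp : p.Prime) :
    ∏ i ∈ range p, (X + C ((i:ℕ) : ZMod p)) = X^p - X := by
  haveI : Fact p.Prime := ⟨hp⟩
  haveI : NeZero p := ⟨hp.ne_zero⟩
  have hcard : Fintype.card (ZMod p) = p := ZMod.card p
  have hq : (1:ℕ) < p := hp.one_lt
  have hroots : (X ^ p - X : (ZMod p)[X]).roots = Finset.univ.val := by
    have := FiniteField.roots_X_pow_card_sub_X (ZMod p)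
    rwa [hcard] at this
  have hdeg : (X ^ p - X : (ZMod p)[X]).natDegree = p := by
    have := FiniteField.X_pow_card_sub_X_natDegree_eq (ZMod p) hq
    exact this
  have hmonic : (X ^ p - X : (ZMod p)[X]).Monic := by
    apply Polynomial.monic_X_pow_sub
    rw [Polynomial.degree_X]
    exact_mod_cast hq
  have hfull := Polynomial.prod_multiset_X_sub_C_of_monic_of_roots_card_eq hmonic
    (by rw [hroots, hdeg]; simp [hcard])
  rw [hroots] at hfull
  have huniv : (Finset.univ.val.map fun a => X - C a).prod = ∏ a : ZMod p, (X - C a) := rfl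
  rw [huniv] at hfull
  rw [← hfull]
  refine Finset.prod_nbij' (fun i => -((i:ℕ) : ZMod p)) (fun a => (-a).val) ?_ ?_ ?_ ?_ ?_
  · intro i hi; exact Finset.mem_univ _
  · intro a ha
    exact Finset.mem_range.mpr (ZMod.val_lt _)
  · intro i hi
    rw [Finset.mem_range] at hi
    simp only [neg_neg]
    exact ZMod.val_natCast_of_lt hi
  · intro a ha
    simp [ZMod.natCast_val, ZMod.cast_id]
  · intro i hi
    simp

lemma gauss_dvd (p : ℕ) (hp : p.Prime) (hodd : Odd p) : p ∣ ∑ c ∈ range p, c := by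
  have h2 : (∑ i ∈ range p, i) * 2 = p * (p-1) := Finset.sum_range_id_mul_two p
  have hdvd : p ∣ (∑ i ∈ range p, i) * 2 := h2 ▸ Dvd.intro _ rfl
  have hne : p ≠ 2 := by
    rintro rfl
    simp [Nat.odd_iff] at hodd
  have hco : Nat.Coprime p 2 := (Nat.Prime.coprime_iff_not_dvd hp).mpr (fun h => by
    have h1 := Nat.le_of_dvd (by norm_num) h
    have h2 := hp.two_le
    omega)
  exact hco.dvd_of_dvd_mul_right hdvd

lemma congr_F (p : ℕ) (hp : p.Prime) (hodd : Odd p) :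
    ∀ k : ℕ, 1 ≤ k → (p:ℤ[X])^k ∣ FF p k - (GG p)^(p^(k-1)) := by
  intro k hk
  induction k,  hk using Nat.le_induction with
  | base =>
      rw [pow_one, pow_zero, pow_one]
      rw [show ((p:ℤ[X]) = ((p:ℕ) : ℤ[X])) by push_cast; ring]
      rw [natCast_dvd_iff_map_eq_zero]
      rw [Polynomial.map_sub]
      have h1 : (FF p 1).map (Int.castRingHom (ZMod p)) = X^p - X := by
        unfold FF
        rw [pow_one, Polynomial.map_prod]
        rw [← zmod_prod p hp]
        refine Finset.prod_congr rfl fun i hi => ?_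
        rw [Polynomial.map_add, Polynomial.map_X, Polynomial.map_C]
        simp
      have h2 : (GG p).map (Int.castRingHom (ZMod p)) = X^p - X := by
        unfold GG
        rw [Polynomial.map_sub, Polynomial.map_pow, Polynomial.map_X]
      rw [h1, h2, sub_self]
  | succ k hk ih =>
      -- decompose F (k+1) into p blocks
      have hsplit : FF p (k+1) = ∏ c ∈ range p, (FF p k).comp (X + C ((c * p^k : ℕ) : ℤ)) := by
        unfold FF
        rw [show p^(k+1) = p * p^k from pow_succ' p k]
        exact prod_block p (p^k)
      -- taylor-expand each block
      choose E hE using fun c : ℕ => comp_taylor (FF p k) ((c * p^k : ℕ) : ℤ)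
      have hfac : ∀ c ∈ range p, (FF p k).comp (X + C ((c * p^k : ℕ) : ℤ))
          = FF p k + (c:ℤ[X]) * ((p:ℤ[X])^k * derivative (FF p k))
            + (p:ℤ[X])^(k+1) * ((c:ℤ[X])^2 * (p:ℤ[X])^(k-1) * E c) := by
        intro c _
        rw [hE c]
        have hC : (C ((c * p^k : ℕ) : ℤ) : ℤ[X]) = (c:ℤ[X]) * (p:ℤ[X])^k := by
          rw [Polynomial.C_eq_natCast]
          push_cast
          ring
        rw [hC]
        have hpk : (p:ℤ[X])^(k+1) * (p:ℤ[X])^(k-1) = ((p:ℤ[X])^k)^2 := by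
          rw [← pow_add, ← pow_mul]
          congr 1
          omega
        calc FF p k + (c:ℤ[X]) * (p:ℤ[X])^k * derivative (FF p k)
              + ((c:ℤ[X]) * (p:ℤ[X])^k)^2 * E c
            = FF p k + (c:ℤ[X]) * ((p:ℤ[X])^k * derivative (FF p k))
              + ((p:ℤ[X])^(k+1) * (p:ℤ[X])^(k-1)) * ((c:ℤ[X])^2 * E c) := by
                rw [hpk]; ring
          _ = _ := by ring
      rw [hsplit, Finset.prod_congr rfl hfac]
      obtain ⟨u, v, huv⟩ := gen_prod ℤ[X] (FF p k) ((p:ℤ[X])^k * derivative (FF p k))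
        ((p:ℤ[X])^(k+1)) (fun c => (c:ℤ[X])^2 * (p:ℤ[X])^(k-1) * E c) p hp.one_le
      rw [huv]
      have hd1 : (p:ℤ[X])^(k+1) ∣ ((∑ c ∈ range p, c : ℕ) : ℤ[X]) *
          ((p:ℤ[X])^k * derivative (FF p k)) * (FF p k) ^ (p - 1) := by
        obtain ⟨s, hs⟩ := gauss_dvd p hp hodd
        rw [hs]
        push_cast
        refine ⟨(s:ℤ[X]) * derivative (FF p k) * (FF p k)^(p-1), by ring⟩
      have hd2 : (p:ℤ[X])^(k+1) ∣ ((p:ℤ[X])^k * derivative (FF p k))^2 * u := by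
        refine ⟨(p:ℤ[X])^(k-1) * (derivative (FF p k))^2 * u, ?_⟩
        rw [mul_pow, ← pow_mul, show k*2 = (k+1)+(k-1) by omega, pow_add]
        ring
      have hd3 : (p:ℤ[X])^(k+1) ∣ (FF p k)^p - ((GG p)^(p^(k-1)))^p :=
        pow_sub_pow_dvd p k hp hk _ _ ih
      have hG : ((GG p)^(p^(k-1)))^p = (GG p)^(p^k) := by
        rw [← pow_mul]
        congr 1
        rw [← pow_succ]
        congr 1
        omega
      rw [hG] at hd3
      have : FF p k ^ p + ((∑ c ∈ range p, c : ℕ) : ℤ[X]) *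
            ((p:ℤ[X])^k * derivative (FF p k)) * (FF p k) ^ (p - 1)
            + ((p:ℤ[X])^k * derivative (FF p k))^2 * u + (p:ℤ[X])^(k+1) * v
            - (GG p)^(p^(k+1-1))
          = ((FF p k)^p - (GG p)^(p^k)) + (((∑ c ∈ range p, c : ℕ) : ℤ[X]) *
            ((p:ℤ[X])^k * derivative (FF p k)) * (FF p k) ^ (p - 1))
            + ((p:ℤ[X])^k * derivative (FF p k))^2 * u + (p:ℤ[X])^(k+1) * v := by
        rw [show k+1-1 = k by omega]
        ring
      rw [this]
      exact dvd_add (dvd_add (dvd_add hd3 hd1) hd2) (Dvd.intro v rfl)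

lemma prod_sub_pow_dvd {R : Type*} [CommRing R] (J B : R) (A : ℕ → R) :
    ∀ a : ℕ, (∀ c ∈ range a, J ∣ A c - B) → J ∣ (∏ c ∈ range a, A c) - B^a := by
  intro a
  induction a with
  | zero => simp
  | succ a ih =>
      intro h
      have h1 : (∏ c ∈ range (a+1), A c) - B^(a+1)
          = ((∏ c ∈ range a, A c) - B^a) * A a + B^a * (A a - B) := by
        rw [prod_range_succ, pow_succ]
        ring
      rw [h1]
      exact dvd_add ((ih fun c hc => h c (by simp at hc ⊢; omega)).mul_right _)
        ((h a (by simp)).mul_left _)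

/-- the full congruence: the product of (X+i) for i < a*p^n is ≡ (X^p - X)^(a p^(n-1)) mod p^n -/
lemma full_congr (p a n : ℕ) (hp : p.Prime) (hodd : Odd p) (hn : 1 ≤ n) :
    (p:ℤ[X])^n ∣ (∏ i ∈ range (a * p^n), (X + C (i:ℤ))) - (GG p)^(a * p^(n-1)) := by
  rw [prod_block a (p^n)]
  have hblock : ∀ c ∈ range a, (p:ℤ[X])^n ∣
      (∏ r ∈ range (p^n), (X + C (r:ℤ))).comp (X + C ((c * p^n : ℕ) : ℤ)) - FF p n := by
    intro c _
    obtain ⟨E, hE⟩ := comp_taylor (FF p n) ((c * p^n : ℕ) : ℤ)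
    have hFF : (∏ r ∈ range (p^n), (X + C (r:ℤ))) = FF p n := rfl
    rw [hFF, hE]
    have hC : (C ((c * p^n : ℕ) : ℤ) : ℤ[X]) = (c:ℤ[X]) * (p:ℤ[X])^n := by
      rw [Polynomial.C_eq_natCast]; push_cast; ring
    rw [hC]
    refine ⟨(c:ℤ[X]) * derivative (FF p n) + ((c:ℤ[X]))^2 * ((p:ℤ[X])^n * E), ?_⟩
    ring
  have h1 : (p:ℤ[X])^n ∣ (∏ c ∈ range a,
      (∏ r ∈ range (p^n), (X + C (r:ℤ))).comp (X + C ((c * p^n : ℕ) : ℤ))) - (FF p n)^a :=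
    prod_sub_pow_dvd _ _ _ a hblock
  have h2 : (p:ℤ[X])^n ∣ (FF p n)^a - ((GG p)^(p^(n-1)))^a := by
    have hc := congr_F p hp hodd n hn
    exact hc.trans (sub_dvd_pow_sub_pow _ _ a)
  have h3 : ((GG p)^(p^(n-1)))^a = (GG p)^(a * p^(n-1)) := by
    rw [← pow_mul, mul_comm]
  rw [h3] at h2
  have := dvd_add h1 h2
  simpa using this

/-- coefficient of (X^p - X)^M at m - j vanishes for odd j -/
lemma coeff_G_pow_eq_zero (R : Type*) [CommRing R] (p M m j : ℕ) (hodd : Odd p)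
    (hm : m = p * M) (hj : Odd j) (hjm : j ≤ m) :
    ((X^p - X : R[X])^M).coeff (m - j) = 0 := by
  have hsub : (X^p - X : R[X]) = X^p + (-X) := by ring
  rw [hsub, add_pow, finset_sum_coeff]
  apply Finset.sum_eq_zero
  intro t ht
  rw [Finset.mem_range, Nat.lt_succ_iff] at ht
  have hterm : ((X:R[X])^p)^t * (-X)^(M-t) * (M.choose t : R[X])
      = C ((-1:R)^(M-t) * (M.choose t : R)) * X^(p*t + (M-t)) := by
    rw [neg_pow, ← pow_mul]
    rw [map_mul, map_pow, map_neg, map_one, Polynomial.C_eq_natCast]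
    ring
  rw [hterm, Polynomial.coeff_C_mul_X_pow]
  rw [if_neg]
  intro heq
  have hps : p * M = p * t + p * (M - t) := by rw [← Nat.mul_add]; congr 1; omega
  have h3 : (p-1) * (M-t) = p * (M-t) - (M-t) := by rw [Nat.sub_one_mul]
  have h1 : j = (p-1) * (M-t) := by omega
  have heven : Even j := by
    rw [h1]
    exact (Nat.Odd.sub_odd hodd odd_one).mul_right _
  exact (Nat.not_even_iff_odd.mpr hj) heven

/-- Main part-1 lemma : p^n divides the Stirling numbers s(ap^n, ap^n - j) for odd j -/
lemma stirling_odd_dvd (p a n : ℕ) (hp : p.Prime) (hodd : Odd p) (hn : 1 ≤ n)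
    (j : ℕ) (hj : Odd j) (hjm : j ≤ a * p^n) :
    p^n ∣ stirlingFirst (a * p^n) (a * p^n - j) := by
  have hfc := full_congr p a n hp hodd hn
  have hcast : (p:ℤ[X])^n = ((p^n : ℕ) : ℤ[X]) := by push_cast; ring
  rw [hcast, natCast_dvd_iff_map_eq_zero, Polynomial.map_sub, sub_eq_zero] at hfc
  have hsf : ((stirlingFirst (a*p^n) (a*p^n - j) : ℕ) : ZMod (p^n))
      = (((∏ i ∈ range (a*p^n), (X + C (i:ℤ))).map (Int.castRingHom (ZMod (p^n)))).coeff (a*p^n - j)) := by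
    have h1 : ((∏ i ∈ range (a*p^n), (X + C (i:ℤ))).map (Int.castRingHom (ZMod (p^n))))
        = ascPochhammer (ZMod (p^n)) (a*p^n) := by
      rw [Polynomial.map_prod, asc_eq_prod]
      refine Finset.prod_congr rfl fun i hi => ?_
      rw [Polynomial.map_add, Polynomial.map_X, Polynomial.map_C]
      simp
    rw [h1]
    unfold stirlingFirst
    rw [← ascPochhammer_map (Nat.castRingHom (ZMod (p^n))) (a*p^n), Polynomial.coeff_map]
    simp
  have hG : (((GG p)^(a * p^(n-1))).map (Int.castRingHom (ZMod (p^n)))).coeff (a*p^n - j) = 0 := by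
    have h2 : ((GG p)^(a * p^(n-1))).map (Int.castRingHom (ZMod (p^n)))
        = ((X^p - X : (ZMod (p^n))[X])^(a * p^(n-1))) := by
      unfold GG
      rw [Polynomial.map_pow, Polynomial.map_sub, Polynomial.map_pow, Polynomial.map_X]
    rw [h2]
    refine coeff_G_pow_eq_zero _ p (a * p^(n-1)) (a*p^n) j hodd ?_ hj hjm
    rw [← mul_assoc, mul_comm p a, mul_assoc, ← pow_succ', show n - 1 + 1 = n from by omega]
  rw [← ZMod.natCast_eq_zero_iff]
  rw [hsf, hfc, hG]

noncomputable def gpoly (m : ℕ) : ℤ[X] := ∏ i ∈ range (m-1), (X + C ((i+1 : ℕ) : ℤ))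

lemma asc_X_mul (m : ℕ) (hm : 1 ≤ m) : ascPochhammer ℤ m = X * gpoly m := by
  rw [asc_eq_prod, show m = (m-1)+1 from by omega, Finset.prod_range_succ']
  unfold gpoly
  rw [show (m-1)+1-1 = m-1 from by omega]
  simp [mul_comm]

lemma stirling_coeff (m j : ℕ) (hm : 1 ≤ m) (hj : j ≤ m - 1) :
    ((stirlingFirst m (m - j) : ℕ) : ℤ) = (gpoly m).coeff (m-1-j) := by
  unfold stirlingFirst
  have h1 : ((ascPochhammer ℕ m).coeff (m-j) : ℤ) = (ascPochhammer ℤ m).coeff (m-j) := by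
    rw [← ascPochhammer_map (Nat.castRingHom ℤ) m, Polynomial.coeff_map]
    simp
  rw [h1, asc_X_mul m hm, show m - j = (m-1-j)+1 from by omega, Polynomial.coeff_X_mul]

lemma gpoly_symm (m : ℕ) : (gpoly m).comp (-(X + C (m:ℤ))) = (-1:ℤ[X])^(m-1) * gpoly m := by
  unfold gpoly
  rw [Polynomial.prod_comp]
  have h1 : ∀ i ∈ range (m-1), (X + C ((i+1 : ℕ) : ℤ)).comp (-(X + C (m:ℤ)))
      = (-1 : ℤ[X]) * (X + C ((((m-1-1-i)+1 : ℕ)) : ℤ)) := by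
    intro i hi
    rw [Finset.mem_range] at hi
    rw [add_comp, X_comp, C_comp]
    have h2 : ((((m-1-1-i)+1 : ℕ)) : ℤ) = (m:ℤ) - ((i+1 : ℕ) : ℤ) := by push_cast; omega
    rw [h2, map_sub]
    ring
  rw [Finset.prod_congr rfl h1, Finset.prod_mul_distrib, Finset.prod_const]
  rw [Finset.card_range]
  congr 1
  exact Finset.prod_range_reflect (fun i => (X + C ((i+1 : ℕ) : ℤ))) (m-1)

lemma comp_coeff (h : ℤ[X]) (N : ℕ) (hN : h.natDegree < N) (c : ℤ) (t : ℕ) :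
    (h.comp (-(X + C c))).coeff t
      = ∑ s ∈ range N, h.coeff s * ((-1:ℤ)^s * (c^(s-t) * ((s.choose t : ℕ) : ℤ))) := by
  conv_lhs => rw [h.as_sum_range' N hN]
  have hsum : (∑ s ∈ range N, monomial s (h.coeff s)).comp (-(X + C c))
      = ∑ s ∈ range N, (monomial s (h.coeff s)).comp (-(X + C c)) := by
    simp only [← Polynomial.coe_compRingHom_apply]
    exact map_sum (compRingHom (-(X + C c))) _ _
  rw [hsum, finset_sum_coeff]
  refine Finset.sum_congr rfl fun s hs => ?_
  rw [← Polynomial.C_mul_X_pow_eq_monomial, mul_comp, C_comp, pow_comp, X_comp]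
  rw [neg_pow]
  have hC1 : ((-1 : ℤ[X]))^s = C ((-1:ℤ)^s) := by simp
  rw [hC1, coeff_C_mul, coeff_C_mul, coeff_X_add_C_pow]

lemma gpoly_natDegree (m : ℕ) : (gpoly m).natDegree = m - 1 := by
  unfold gpoly
  rw [Polynomial.natDegree_prod _ _ (fun i _ => X_add_C_ne_zero _)]
  rw [Finset.sum_congr rfl (fun i _ => natDegree_X_add_C _)]
  simp

lemma master (m K : ℕ) (hm : 2 ≤ m) (hK : Odd K) (hK1 : 1 ≤ K) (hKm : K ≤ m - 1) :
    (2:ℤ) * (gpoly m).coeff (m-1-K)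
      = (gpoly m).coeff (m-1-(K-1)) * (((m - K : ℕ) : ℤ) * (m:ℤ))
        + ∑ j ∈ range (K-1), (-1:ℤ)^j * ((gpoly m).coeff (m-1-j) *
            ((m:ℤ)^((m-1-j)-(m-1-K)) * (((m-1-j).choose (m-1-K)) : ℤ))) := by
  have hdeg : (gpoly m).natDegree < m := by rw [gpoly_natDegree]; omega
  have h0 := comp_coeff (gpoly m) m hdeg (m:ℤ) (m-1-K)
  rw [gpoly_symm] at h0
  have hL : ((-1:ℤ[X])^(m-1) * gpoly m).coeff (m-1-K)
      = (-1:ℤ)^(m-1) * (gpoly m).coeff (m-1-K) := by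
    have hc : ((-1:ℤ[X]))^(m-1) = C ((-1:ℤ)^(m-1)) := by simp
    rw [hc, coeff_C_mul]
  rw [hL] at h0
  rw [← Finset.sum_range_reflect
    (fun s => (gpoly m).coeff s * ((-1:ℤ)^s * ((m:ℤ)^(s-(m-1-K)) * ((s.choose (m-1-K) : ℕ) : ℤ)))) m] at h0
  have hσ : ((-1:ℤ)^(m-1)) * ((-1:ℤ)^(m-1)) = 1 := by
    rw [← pow_add]; exact Even.neg_one_pow ⟨m-1, by ring⟩
  have h2 : (gpoly m).coeff (m-1-K) = ∑ j ∈ range m, (-1:ℤ)^j *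
      ((gpoly m).coeff (m-1-j) * ((m:ℤ)^((m-1-j)-(m-1-K)) * (((m-1-j).choose (m-1-K)) : ℤ))) := by
    have hstep : (gpoly m).coeff (m-1-K)
        = (-1:ℤ)^(m-1) * ∑ j ∈ range m, (gpoly m).coeff (m-1-j) *
          ((-1:ℤ)^(m-1-j) * ((m:ℤ)^((m-1-j)-(m-1-K)) * (((m-1-j).choose (m-1-K) : ℕ) : ℤ))) := by
      rw [← h0, ← mul_assoc, hσ, one_mul]
    rw [hstep, Finset.mul_sum]
    refine Finset.sum_congr rfl fun j hj => ?_
    rw [Finset.mem_range] at hj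
    have hsgn : (-1:ℤ)^(m-1) * (-1:ℤ)^(m-1-j) = (-1:ℤ)^j := by
      rw [← pow_add, show (m-1)+(m-1-j) = 2*(m-1-j)+j from by omega, pow_add, pow_mul]
      norm_num
    calc (-1:ℤ)^(m-1) * ((gpoly m).coeff (m-1-j) *
          ((-1:ℤ)^(m-1-j) * ((m:ℤ)^((m-1-j)-(m-1-K)) * (((m-1-j).choose (m-1-K) : ℕ) : ℤ))))
        = ((-1:ℤ)^(m-1) * (-1:ℤ)^(m-1-j)) * ((gpoly m).coeff (m-1-j) *
          ((m:ℤ)^((m-1-j)-(m-1-K)) * (((m-1-j).choose (m-1-K) : ℕ) : ℤ))) := by ring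
      _ = _ := by rw [hsgn]
  have h4 : ∑ j ∈ range m, (-1:ℤ)^j *
      ((gpoly m).coeff (m-1-j) * ((m:ℤ)^((m-1-j)-(m-1-K)) * (((m-1-j).choose (m-1-K)) : ℤ)))
      = ∑ j ∈ range (K+1), (-1:ℤ)^j *
      ((gpoly m).coeff (m-1-j) * ((m:ℤ)^((m-1-j)-(m-1-K)) * (((m-1-j).choose (m-1-K)) : ℤ))) := by
    symm
    apply Finset.sum_subset (Finset.range_subset_range.mpr (by omega))
    intro j hjm hjK
    rw [Finset.mem_range] at hjm hjK
    have hz : (m-1-j).choose (m-1-K) = 0 := Nat.choose_eq_zero_of_lt (by omega)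
    rw [hz]
    simp
  rw [h4] at h2
  obtain ⟨K', rfl⟩ : ∃ K', K = K'+1 := ⟨K-1, by omega⟩
  rw [Finset.sum_range_succ, Finset.sum_range_succ] at h2
  have hGK : (-1:ℤ)^(K'+1) * ((gpoly m).coeff (m-1-(K'+1)) *
      ((m:ℤ)^((m-1-(K'+1))-(m-1-(K'+1))) * (((m-1-(K'+1)).choose (m-1-(K'+1))) : ℤ)))
      = -(gpoly m).coeff (m-1-(K'+1)) := by
    rw [Nat.sub_self, pow_zero, Nat.choose_self, Odd.neg_one_pow hK]
    simp
  have hev : Even K' := by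
    rcases hK with ⟨w, hw⟩
    exact ⟨w, by omega⟩
  have hGK' : (-1:ℤ)^(K') * ((gpoly m).coeff (m-1-K') *
      ((m:ℤ)^((m-1-K')-(m-1-(K'+1))) * (((m-1-K').choose (m-1-(K'+1))) : ℤ)))
      = (gpoly m).coeff (m-1-K') * (((m - (K'+1) : ℕ) : ℤ) * (m:ℤ)) := by
    rw [Even.neg_one_pow hev, show (m-1-K')-(m-1-(K'+1)) = 1 from by omega, pow_one]
    rw [show m-1-K' = m-(K'+1) from by omega,
      show m-1-(K'+1) = (m-(K'+1)) - 1 from by omega,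
      Nat.choose_symm (by omega : 1 ≤ m - (K'+1)), Nat.choose_one_right]
    ring
  rw [hGK, hGK'] at h2
  rw [show (K'+1)-1 = K' from by omega]
  linarith [h2]

lemma gpoly_coeff_pos (m j : ℕ) (hm : 1 ≤ m) (hj : j ≤ m-1) :
    0 < (gpoly m).coeff (m-1-j) := by
  unfold gpoly
  rw [Finset.prod_X_add_C_coeff (range (m-1)) (fun i : ℕ => ((i+1:ℕ):ℤ)) (by rw [Finset.card_range]; omega)]
  apply Finset.sum_pos
  · intro t ht
    exact Finset.prod_pos fun i hi => by positivity
  · rw [← Finset.card_pos, Finset.card_powersetCard]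
    exact Nat.choose_pos (Nat.sub_le _ _)

lemma stirling_pos (m j : ℕ) (hm : 1 ≤ m) (hj : j ≤ m-1) :
    0 < stirlingFirst m (m - j) := by
  have h := gpoly_coeff_pos m j hm hj
  rw [← stirling_coeff m j hm hj] at h
  exact_mod_cast h

end Stmt6

open Stmt6 in
theorem stmt6 (p a n k : ℕ) (hp : p.Prime) (hp5 : 5 ≤ p)
    (ha : 1 ≤ a) (hn : 1 ≤ n) (hgcd : Nat.gcd a p = 1)
    (hkodd : Odd k) (hk1 : 1 ≤ k) (hk2 : k ≤ a * p ^ n - 1)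
    (hval : padicValNat p (stirlingFirst (a * p ^ n) (a * p ^ n - k + 1)) ≤ 2 * n - 1) :
    padicValNat p (stirlingFirst (a * p ^ n) (a * p ^ n - k)) =
      padicValNat p (stirlingFirst (a * p ^ n) (a * p ^ n - k + 1)) +
        padicValNat p (a * p ^ n - k) + n := by
  haveI : Fact p.Prime := ⟨hp⟩
  set m := a * p ^ n with hmdef
  have hpn : p ^ n ≤ m := Nat.le_mul_of_pos_left _ ha
  have hp_le : p ≤ p ^ n := Nat.le_self_pow (by omega) p
  have hm5 : 5 ≤ m := by omega
  have hKm : k ≤ m - 1 := hk2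
  have hmk1 : m - k + 1 = m - (k-1) := by omega
  rw [hmk1] at hval ⊢
  have hodd : Odd p := hp.odd_of_ne_two (by omega)
  have hpa : ¬ p ∣ a := by
    intro hd
    have h1 : p ∣ Nat.gcd a p := Nat.dvd_gcd hd dvd_rfl
    rw [hgcd] at h1
    have := Nat.le_of_dvd one_pos h1
    omega
  set u := padicValNat p (stirlingFirst m (m - (k-1))) with hu
  set w := padicValNat p (m - k) with hw
  have hEK1_pos := stirling_pos m (k-1) (by omega) (by omega)
  have hEK_pos := stirling_pos m k (by omega) hKm
  have hmk_pos : 0 < m - k := by omega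
  have hmaster := master m k (by omega) hkodd hk1 hKm
  rw [(stirling_coeff m k (by omega) hKm).symm,
      (stirling_coeff m (k-1) (by omega) (by omega)).symm] at hmaster
  -- divisibility of the remainder sum
  have hS : ((p:ℤ))^(3*n + w) ∣ ∑ j ∈ range (k-1), (-1:ℤ)^j * ((gpoly m).coeff (m-1-j) *
      ((m:ℤ)^((m-1-j)-(m-1-k)) * (((m-1-j).choose (m-1-k)) : ℤ))) := by
    apply Finset.dvd_sum
    intro j hj
    rw [Finset.mem_range] at hj
    have hjk : j ≤ k - 2 := by omega
    set d := k - j with hd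
    have hd2 : 2 ≤ d := by omega
    have he : (m-1-j)-(m-1-k) = d := by omega
    rw [← stirling_coeff m j (by omega) (by omega), he]
    have hvfval := sub_one_mul_padicValNat_factorial (p := p) d
    set vf := padicValNat p (Nat.factorial d) with hvf
    have h4vf : 4 * vf ≤ d := by
      have h1 : 4 * vf ≤ (p-1) * vf := Nat.mul_le_mul_right vf (by omega)
      omega
    -- divisibility of the binomial coefficient
    have hchdvd : (p:ℤ)^(w - vf) ∣ (((m-1-j).choose (m-1-k)) : ℤ) := by
      have hsymm : (m-1-j).choose (m-1-k) = (m-1-j).choose d := by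
        rw [← Nat.choose_symm (show m-1-k ≤ m-1-j by omega),
          show (m-1-j)-(m-1-k) = d from by omega]
      rw [hsymm]
      have hdesc : (m-k) ∣ (m-1-j).descFactorial d := by
        rw [show d = (d-1)+1 from by omega, Nat.descFactorial_succ,
          show (m-1-j)-(d-1) = m-k from by omega]
        exact Dvd.dvd.mul_right dvd_rfl _
      have hwd : p ^ w ∣ Nat.factorial d * (m-1-j).choose d := by
        rw [← Nat.descFactorial_eq_factorial_mul_choose]
        exact dvd_trans pow_padicValNat_dvd hdesc
      have hchoose_ne : (m-1-j).choose d ≠ 0 := (Nat.choose_pos (by omega)).ne'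
      have hle : w ≤ vf + padicValNat p ((m-1-j).choose d) := by
        have h1 := (hp.pow_dvd_iff_le_factorization
          (mul_ne_zero (Nat.factorial_ne_zero d) hchoose_ne)).mp hwd
        rw [Nat.factorization_mul (Nat.factorial_ne_zero d) hchoose_ne] at h1
        simp only [Finsupp.coe_add, Pi.add_apply] at h1
        rw [Nat.factorization_def _ hp, Nat.factorization_def _ hp] at h1
        exact h1
      have h2 : p^(w - vf) ∣ (m-1-j).choose d := by
        apply (hp.pow_dvd_iff_le_factorization hchoose_ne).mpr
        rw [Nat.factorization_def _ hp]
        omega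
      exact_mod_cast Int.natCast_dvd_natCast.mpr h2
    have hmp : (p:ℤ)^(d*n) ∣ ((m:ℤ))^d := by
      have h1 : ((m:ℤ))^d = (p:ℤ)^(d*n) * ((a:ℤ))^d := by
        rw [hmdef]
        push_cast
        rw [mul_pow, ← pow_mul, Nat.mul_comm n d]
        ring
      rw [h1]
      exact Dvd.dvd.mul_right dvd_rfl _
    rcases Nat.even_or_odd j with hje | hjo
    · -- j even, so d odd and d ≥ 3
      have hdodd : d % 2 = 1 := by
        have h1 := Nat.odd_iff.mp hkodd
        have h2 := Nat.even_iff.mp hje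
        omega
      have harith : 3*n + w ≤ d*n + (w - vf) := by
        have hsplit : d*n = (d-3)*n + 3*n := by rw [← Nat.add_mul]; congr 1; omega
        have hmul : (d-3) * 1 ≤ (d-3)*n := Nat.mul_le_mul_left _ hn
        omega
      have hdd := mul_dvd_mul hmp hchdvd
      rw [← pow_add] at hdd
      have h3 : ((p:ℤ))^(3*n+w) ∣ ((m:ℤ))^d * (((m-1-j).choose (m-1-k)) : ℤ) :=
        dvd_trans (pow_dvd_pow _ harith) hdd
      exact Dvd.dvd.mul_left (Dvd.dvd.mul_left h3 _) _
    · -- j odd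
      have hα : (p:ℤ)^n ∣ ((stirlingFirst m (m - j) : ℕ) : ℤ) := by
        have := stirling_odd_dvd p a n hp hodd hn j hjo (by omega)
        exact_mod_cast Int.natCast_dvd_natCast.mpr this
      have harith : 3*n + w ≤ n + (d*n + (w - vf)) := by
        have hsplit : d*n = (d-2)*n + 2*n := by rw [← Nat.add_mul]; congr 1; omega
        have hmul : (d-2) * 1 ≤ (d-2)*n := Nat.mul_le_mul_left _ hn
        omega
      have hdd := mul_dvd_mul hα (mul_dvd_mul hmp hchdvd)
      rw [← pow_add, ← pow_add] at hdd
      have h3 := dvd_trans (pow_dvd_pow ((p:ℤ)) harith) hdd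
      exact Dvd.dvd.mul_left h3 _
  -- v_p(m) = n
  have hvm : padicValNat p m = n := by
    rw [hmdef, padicValNat.mul (by omega) (by positivity), padicValNat.eq_zero_of_not_dvd hpa,
      padicValNat.prime_pow]
    omega
  -- lower bound divisibility
  have hdvd_main : ((p:ℤ))^(u+w+n) ∣
      ((stirlingFirst m (m-(k-1)) : ℕ) : ℤ) * (((m-k : ℕ) : ℤ) * ((m:ℕ) : ℤ)) := by
    have h1 : (p:ℕ)^u ∣ stirlingFirst m (m-(k-1)) := pow_padicValNat_dvd
    have h2 : (p:ℕ)^w ∣ (m-k) := pow_padicValNat_dvd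
    have h3 : (p:ℕ)^n ∣ m := ⟨a, by rw [hmdef]; ring⟩
    have h4 := mul_dvd_mul h1 (mul_dvd_mul h2 h3)
    rw [← pow_add, ← pow_add, show u+(w+n) = u+w+n from by omega] at h4
    exact_mod_cast Int.natCast_dvd_natCast.mpr h4
  have hSle : ((p:ℤ))^(u+w+n) ∣ ∑ j ∈ range (k-1), (-1:ℤ)^j * ((gpoly m).coeff (m-1-j) *
      ((m:ℤ)^((m-1-j)-(m-1-k)) * (((m-1-j).choose (m-1-k)) : ℤ))) :=
    dvd_trans (pow_dvd_pow _ (by omega : u+w+n ≤ 3*n+w)) hS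
  have hdvd2 : (p:ℕ)^(u+w+n) ∣ 2 * stirlingFirst m (m-k) := by
    have h1 : ((p:ℤ))^(u+w+n) ∣ 2 * ((stirlingFirst m (m-k) : ℕ) : ℤ) := by
      rw [hmaster]
      exact dvd_add hdvd_main hSle
    exact_mod_cast h1
  have hco2 : Nat.Coprime (p^(u+w+n)) 2 := by
    apply Nat.Coprime.pow_left
    exact (Nat.coprime_primes hp Nat.prime_two).mpr (by omega)
  have hdvdEK : p^(u+w+n) ∣ stirlingFirst m (m-k) := hco2.dvd_of_dvd_mul_left hdvd2
  -- exact valuation of the main term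
  have hP : padicValNat p (stirlingFirst m (m-(k-1)) * ((m-k) * m)) = u + w + n := by
    rw [padicValNat.mul hEK1_pos.ne' (by positivity),
      padicValNat.mul hmk_pos.ne' (by omega), hvm]
    omega
  have hnotdvd : ¬ (p:ℕ)^(u+w+n+1) ∣ stirlingFirst m (m-k) := by
    intro hcon
    have h1 : ((p:ℤ))^(u+w+n+1) ∣ 2 * ((stirlingFirst m (m-k) : ℕ) : ℤ) :=
      Dvd.dvd.mul_left (by exact_mod_cast Int.natCast_dvd_natCast.mpr hcon) 2
    have h2 : ((p:ℤ))^(u+w+n+1) ∣ ∑ j ∈ range (k-1), (-1:ℤ)^j * ((gpoly m).coeff (m-1-j) *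
        ((m:ℤ)^((m-1-j)-(m-1-k)) * (((m-1-j).choose (m-1-k)) : ℤ))) :=
      dvd_trans (pow_dvd_pow _ (by omega : u+w+n+1 ≤ 3*n+w)) hS
    rw [hmaster] at h1
    have h3 := dvd_sub h1 h2
    rw [add_sub_cancel_right] at h3
    have h4 : (p:ℕ)^(u+w+n+1) ∣ stirlingFirst m (m-(k-1)) * ((m-k) * m) := by
      have h5 : (((stirlingFirst m (m-(k-1)) * ((m-k) * m)) : ℕ) : ℤ)
          = ((stirlingFirst m (m-(k-1)) : ℕ) : ℤ) * (((m-k : ℕ) : ℤ) * ((m:ℕ) : ℤ)) := by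
        push_cast
        ring
      rw [← Int.natCast_dvd_natCast]
      push_cast
      push_cast at h3
      convert h3 using 1
    have h6 := (hp.pow_dvd_iff_le_factorization (by positivity)).mp h4
    rw [Nat.factorization_def _ hp, hP] at h6
    omega
  have hle1 : u+w+n ≤ padicValNat p (stirlingFirst m (m-k)) := by
    have := (hp.pow_dvd_iff_le_factorization hEK_pos.ne').mp hdvdEK
    rwa [Nat.factorization_def _ hp] at this
  have hle2 : padicValNat p (stirlingFirst m (m-k)) ≤ u+w+n := by
    by_contra hcon
    push_neg at hcon
    exact hnotdvd (dvd_trans (pow_dvd_pow p (by omega)) pow_padicValNat_dvd)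
  omega
end

section
/- Let p ≥ 5 be a prime, let a and n be positive integers with gcd(a,p) = 1, and let k be an odd integer with 1 ≤ k ≤ ap^n - 1. If v_p(s(ap^n, ap^n - k + 1)) ≥ 2n, then v_p(s(ap^n, ap^n - k)) ≥ v_p(ap^n - k) + 3n. -/
open Polynomial Finset

lemma ascPochhammer_int_prod (N : ℕ) :
    ascPochhammer ℤ N = ∏ i ∈ range N, (X + C (i : ℤ)) := by
  induction N with
  | zero => simp
  | succ n ih =>
    rw [ascPochhammer_succ_right, ih, prod_range_succ]
    norm_cast

/-- the polynomial `(Z+1)(Z+2)⋯(Z+N-1)`. -/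
noncomputable def Rpoly (N : ℕ) : ℤ[X] := ∏ i ∈ range (N - 1), (X + C ((i : ℤ) + 1))

lemma Rpoly_eq (N : ℕ) (hN : 1 ≤ N) : ascPochhammer ℤ N = X * Rpoly N := by
  conv_lhs => rw [ascPochhammer_int_prod, ← Nat.sub_add_cancel hN]
  rw [prod_range_succ']
  have : ∀ i ∈ range (N - 1), (X + C (((i + 1 : ℕ)) : ℤ)) = X + C ((i : ℤ) + 1) := by
    intro i _; push_cast; ring
  rw [prod_congr rfl this]
  simp [Rpoly, mul_comm]

lemma Rpoly_coeff (N : ℕ) (hN : 1 ≤ N) (m : ℕ) :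
    (Rpoly N).coeff m = (stirlingFirst N (m + 1) : ℤ) := by
  have h2 : (ascPochhammer ℤ N).coeff (m + 1) = (stirlingFirst N (m + 1) : ℤ) := by
    rw [← ascPochhammer_map (Nat.castRingHom ℤ) N, coeff_map]
    rfl
  rw [← coeff_X_mul (Rpoly N) m, ← Rpoly_eq N hN, h2]

lemma Rpoly_natDegree (N : ℕ) : (Rpoly N).natDegree = N - 1 := by
  rw [Rpoly, natDegree_prod]
  · simp only [natDegree_X_add_C, sum_const, card_range, smul_eq_mul, mul_one]
  · intro i _
    exact (monic_X_add_C _).ne_zero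

lemma Rpoly_reflect (N : ℕ) :
    (Rpoly N).comp (-(X + C (N : ℤ))) = C ((-1 : ℤ) ^ (N - 1)) * Rpoly N := by
  rw [Rpoly, Polynomial.prod_comp]
  have h : ∀ i ∈ range (N - 1),
      (X + C ((i : ℤ) + 1)).comp (-(X + C (N : ℤ)))
        = (-1) * (X + C (((N - 1 - 1 - i : ℕ) : ℤ) + 1)) := by
    intro i hi
    have hi' : i < N - 1 := mem_range.mp hi
    have hc : ((N - 1 - 1 - i : ℕ) : ℤ) = (N : ℤ) - (i : ℤ) - 2 := by
      have h2 : i + 2 ≤ N := by omega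
      omega
    simp only [add_comp, X_comp, C_comp, hc, C_add, C_sub, C_1, C_neg, map_ofNat, one_comp]
    ring
  rw [prod_congr rfl h, prod_mul_distrib, prod_const,
    prod_range_reflect (fun j => X + C ((j : ℤ) + 1)) (N - 1)]
  rw [card_range, show ((-1 : ℤ[X])) = C (-1) from by simp, ← C_pow]

lemma keyIdent (N : ℕ) (hN : 1 ≤ N) (M : ℕ) :
    ∑ i ∈ range N, (stirlingFirst N (i + 1) : ℤ) *
        ((-1 : ℤ) ^ i * ((N : ℤ) ^ (i - M) * (i.choose M : ℤ)))
      = (-1 : ℤ) ^ (N - 1) * (stirlingFirst N (M + 1) : ℤ) := by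
  have hdeg : (Rpoly N).natDegree < N := by rw [Rpoly_natDegree]; omega
  have hsum : (Rpoly N).comp (-(X + C (N : ℤ)))
      = ∑ i ∈ range N, C ((Rpoly N).coeff i) * (-(X + C (N : ℤ))) ^ i := by
    rw [comp]; exact eval₂_eq_sum_range' C hdeg _
  have h := congrArg (fun q : ℤ[X] => q.coeff M) (Rpoly_reflect N)
  rw [hsum, finset_sum_coeff, coeff_C_mul, Rpoly_coeff N hN] at h
  rw [← h]
  apply Finset.sum_congr rfl
  intro i _
  rw [coeff_C_mul, Rpoly_coeff N hN]
  have hq : (-(X + C (N : ℤ))) ^ i = C ((-1 : ℤ) ^ i) * (X + C (N : ℤ)) ^ i := by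
    rw [neg_pow]
    congr 1
    rw [← C_1 (R := ℤ), ← C_neg, ← C_pow]
  rw [hq, coeff_C_mul, coeff_X_add_C_pow]
  try ring

lemma stirlingFirst_pos : ∀ {N m : ℕ}, 1 ≤ m → m ≤ N → 0 < stirlingFirst N m := by
  intro N
  induction N with
  | zero => intro m h1 h2; omega
  | succ n ih =>
    intro m h1 h2
    unfold stirlingFirst at *
    rw [ascPochhammer_succ_right]
    obtain ⟨m', rfl⟩ : ∃ m', m = m' + 1 := ⟨m - 1, by omega⟩
    have hX : (ascPochhammer ℕ n * (X + (n : ℕ[X]))).coeff (m' + 1)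
        = (ascPochhammer ℕ n).coeff m' + (ascPochhammer ℕ n).coeff (m' + 1) * n := by
      rw [mul_add, coeff_add, coeff_mul_X]
      congr 1
      rw [← C_eq_natCast, coeff_mul_C]
      simp
    rw [hX]
    rcases Nat.eq_zero_or_pos n with hn | hn
    · subst hn
      have : m' = 0 := by omega
      subst this
      simp [ascPochhammer_zero]
    · rcases Nat.eq_zero_or_pos m' with hm | hm
      · subst hm
        exact Nat.add_pos_right _ (Nat.mul_pos (ih (le_refl 1) hn) hn)
      · exact Nat.add_pos_left (ih hm (by omega)) _

lemma stirling_bonus {p N nn : ℕ} (hp : p.Prime) (hp5 : 5 ≤ p)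
    (hdvd : p ^ nn ∣ N) {j : ℕ} (hj1 : 1 ≤ j) (hodd : Odd (N - j)) :
    p ^ nn ∣ stirlingFirst N j := by
  obtain ⟨M, rfl⟩ : ∃ M, j = M + 1 := ⟨j - 1, by omega⟩
  have hjN : M + 1 ≤ N - 1 := by
    rcases hodd with ⟨t, ht⟩; omega
  have hN : 1 ≤ N := by omega
  have hkey := keyIdent N hN M
  have hM1 : M ∈ range N := mem_range.mpr (by omega)
  rw [← Finset.sum_erase_add _ _ hM1] at hkey
  have hsign : (-1 : ℤ) ^ (N - 1) = (-1 : ℤ) ^ M * (-1 : ℤ) ^ (N - (M + 1)) := by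
    rw [← pow_add]; congr 1; omega
  have hoddpow : (-1 : ℤ) ^ (N - (M + 1)) = -1 := hodd.neg_one_pow
  set s : ℤ := (stirlingFirst N (M + 1) : ℤ) with hs
  have hT : ∑ i ∈ (range N).erase M, (stirlingFirst N (i + 1) : ℤ) *
        ((-1 : ℤ) ^ i * ((N : ℤ) ^ (i - M) * (i.choose M : ℤ)))
      = (-1 : ℤ) ^ M * (-2 * s) := by
    have hfM : (stirlingFirst N (M + 1) : ℤ) *
        ((-1 : ℤ) ^ M * ((N : ℤ) ^ (M - M) * (M.choose M : ℤ))) = (-1 : ℤ) ^ M * s := by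
      simp [Nat.sub_self]
      ring
    rw [hfM, hsign, hoddpow] at hkey
    linear_combination hkey
  have hdvdT : (p : ℤ) ^ nn ∣ ∑ i ∈ (range N).erase M, (stirlingFirst N (i + 1) : ℤ) *
      ((-1 : ℤ) ^ i * ((N : ℤ) ^ (i - M) * (i.choose M : ℤ))) := by
    apply Finset.dvd_sum
    intro i hi
    have hiM : i ≠ M := (mem_erase.mp hi).1
    rcases lt_or_gt_of_ne hiM with h | h
    · simp [Nat.choose_eq_zero_of_lt h]
    · have hpN : (p : ℤ) ^ nn ∣ (N : ℤ) := by
        exact_mod_cast Int.natCast_dvd_natCast.mpr hdvd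
      have h2 : (p : ℤ) ^ nn ∣ (N : ℤ) ^ (i - M) :=
        hpN.trans (dvd_pow_self (N : ℤ) (by omega))
      exact ((h2.mul_right _).mul_left _).mul_left _
  rw [hT] at hdvdT
  have h3 : (p : ℤ) ^ nn ∣ -(2 * s) := by
    have h4 := hdvdT.mul_left ((-1 : ℤ) ^ M)
    have h5 : (-1 : ℤ) ^ M * ((-1 : ℤ) ^ M * (-2 * s)) = -(2 * s) := by
      rw [← mul_assoc, ← mul_pow]
      norm_num
    rwa [h5] at h4
  have h6 : (p : ℤ) ^ nn ∣ 2 * s := (dvd_neg).mp h3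
  have hcop : IsCoprime ((p : ℤ) ^ nn) 2 := by
    have hodd2 : Odd p := hp.odd_of_ne_two (by omega)
    have : Nat.Coprime (p ^ nn) 2 := (Nat.coprime_two_right.mpr hodd2).pow_left _
    have := Nat.isCoprime_iff_coprime.mpr this
    push_cast at this
    exact this
  have h7 : (p : ℤ) ^ nn ∣ s := by
    rw [mul_comm] at h6
    exact hcop.dvd_of_dvd_mul_right h6
  have : ((p ^ nn : ℕ) : ℤ) ∣ (stirlingFirst N (M + 1) : ℤ) := by push_cast; exact h7
  exact_mod_cast this

lemma master {p nn N k : ℕ} (hp : p.Prime) (hp5 : 5 ≤ p) (hn : 1 ≤ nn)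
    (hdvd : p ^ nn ∣ N) (hkodd : Odd k) (hk1 : 1 ≤ k) (hk2 : k ≤ N - 1) (hN1 : 1 ≤ N) :
    (p : ℤ) ^ (3 * nn + padicValNat p (N - k)) ∣
      (N : ℤ) * ((N - k : ℕ) : ℤ) * (stirlingFirst N (N - k + 1) : ℤ)
        - 2 * (stirlingFirst N (N - k) : ℤ) := by
  haveI : Fact p.Prime := ⟨hp⟩
  have hkN : k < N := by omega
  set M := N - 1 - k with hMdef
  set v := padicValNat p (N - k) with hv
  set E := 3 * nn + v with hE
  have hkey := keyIdent N hN1 M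
  have hM1 : M ∈ range N := mem_range.mpr (by omega)
  have hM2 : M + 1 ∈ (range N).erase M :=
    mem_erase.mpr ⟨by omega, mem_range.mpr (by omega)⟩
  rw [← Finset.sum_erase_add _ _ hM1, ← Finset.sum_erase_add _ _ hM2] at hkey
  have e1 : M + 1 = N - k := by omega
  set s : ℤ := (stirlingFirst N (N - k) : ℤ) with hs
  set s' : ℤ := (stirlingFirst N (N - k + 1) : ℤ) with hs'
  have hfM : (stirlingFirst N (M + 1) : ℤ) *
      ((-1 : ℤ) ^ M * ((N : ℤ) ^ (M - M) * (M.choose M : ℤ))) = (-1 : ℤ) ^ M * s := by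
    rw [e1]; simp [Nat.sub_self]; ring
  have hfM1 : (stirlingFirst N (M + 1 + 1) : ℤ) *
      ((-1 : ℤ) ^ (M + 1) * ((N : ℤ) ^ (M + 1 - M) * ((M + 1).choose M : ℤ))) =
      -((-1 : ℤ) ^ M * ((N : ℤ) * ((N - k : ℕ) : ℤ) * s')) := by
    have h1 : M + 1 + 1 = N - k + 1 := by omega
    have h2 : M + 1 - M = 1 := by omega
    have h3 : (M + 1).choose M = M + 1 := Nat.choose_succ_self_right M
    have h4 : ((M + 1 : ℕ) : ℤ) = ((N - k : ℕ) : ℤ) := by rw [e1]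
    rw [h1, h2, h3, pow_succ, pow_one, h4]
    ring
  have hsign : (-1 : ℤ) ^ (N - 1) = -(-1 : ℤ) ^ M := by
    have : N - 1 = M + k := by omega
    rw [this, pow_add, hkodd.neg_one_pow]
    ring
  have hrhs : (stirlingFirst N (M + 1) : ℤ) = s := by rw [e1]
  have hT : ∑ i ∈ ((range N).erase M).erase (M + 1), (stirlingFirst N (i + 1) : ℤ) *
        ((-1 : ℤ) ^ i * ((N : ℤ) ^ (i - M) * (i.choose M : ℤ)))
      = (-1 : ℤ) ^ M * ((N : ℤ) * ((N - k : ℕ) : ℤ) * s' - 2 * s) := by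
    rw [hfM, hfM1, hsign, hrhs] at hkey
    linear_combination hkey
  have hdvdT : (p : ℤ) ^ E ∣ ∑ i ∈ ((range N).erase M).erase (M + 1),
      (stirlingFirst N (i + 1) : ℤ) *
        ((-1 : ℤ) ^ i * ((N : ℤ) ^ (i - M) * (i.choose M : ℤ))) := by
    apply Finset.dvd_sum
    intro i hi
    have hi1 : i ≠ M + 1 := (mem_erase.mp hi).1
    have hi2 : i ≠ M := (mem_erase.mp (mem_erase.mp hi).2).1
    have hiN : i < N := mem_range.mp (mem_erase.mp (mem_erase.mp hi).2).2
    rcases lt_or_gt_of_ne hi2 with h | h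
    · simp [Nat.choose_eq_zero_of_lt h]
    · -- i ≥ M + 2
      obtain ⟨r, rfl⟩ : ∃ r, i = M + r := ⟨i - M, by omega⟩
      have hrge : 2 ≤ r := by omega
      have him : M + r - M = r := by omega
      rw [him]
      -- natural number divisibility
      have hnat : p ^ E ∣ stirlingFirst N (M + r + 1) * (N ^ r * (M + r).choose M) := by
        have hApos : 0 < stirlingFirst N (M + r + 1) := stirlingFirst_pos (by omega) (by omega)
        have hNpos : 0 < N := by omega
        have hCpos : 0 < (M + r).choose M := Nat.choose_pos (by omega)
        rw [padicValNat_dvd_iff_le (by positivity)]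
        rw [padicValNat.mul (by positivity) (by positivity),
          padicValNat.mul (by positivity) (by positivity),
          padicValNat.pow _ _]
        have hvN : nn ≤ padicValNat p N := (padicValNat_dvd_iff_le (by omega)).mp hdvd
        have hvC : v ≤ padicValNat p ((M + r).choose M) + padicValNat p (Nat.factorial r) := by
          have hdvdc : (N - k) ∣ (M + r).choose M * Nat.factorial r := by
            have hML : M ≤ M + r := by omega
            have hfac : (M + r).choose M * Nat.factorial M * Nat.factorial r
                = Nat.factorial (M + r) := by
              have := Nat.choose_mul_factorial_mul_factorial hML
              rwa [Nat.add_sub_cancel_left] at this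
            have h2 : Nat.factorial (M + 1) ∣ Nat.factorial (M + r) :=
              Nat.factorial_dvd_factorial (by omega)
            obtain ⟨c, hc⟩ := h2
            have h5 : ((M + r).choose M * Nat.factorial r) * Nat.factorial M
                = ((M + 1) * c) * Nat.factorial M := by
              rw [Nat.factorial_succ] at hc
              calc ((M + r).choose M * Nat.factorial r) * Nat.factorial M
                  = (M + r).choose M * Nat.factorial M * Nat.factorial r := by ring
                _ = Nat.factorial (M + r) := hfac
                _ = ((M + 1) * c) * Nat.factorial M := by rw [hc]; ring
            have h6 : (M + r).choose M * Nat.factorial r = (M + 1) * c :=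
              Nat.eq_of_mul_eq_mul_right (Nat.factorial_pos M) h5
            rw [← e1]
            exact ⟨c, h6⟩
          have h7 : p ^ v ∣ (M + r).choose M * Nat.factorial r :=
            (pow_padicValNat_dvd).trans hdvdc
          have h8 := (padicValNat_dvd_iff_le
            (Nat.mul_ne_zero hCpos.ne' (Nat.factorial_ne_zero r))).mp h7
          rwa [padicValNat.mul hCpos.ne' (Nat.factorial_ne_zero r)] at h8
        have hbonus : Even r → nn ≤ padicValNat p (stirlingFirst N (M + r + 1)) := by
          intro heven
          have hoddm : Odd (N - (M + r + 1)) := by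
            have hNi : N - (M + r + 1) = k - r := by omega
            rw [hNi]
            rcases hkodd with ⟨t, ht⟩
            rcases heven with ⟨u, hu⟩
            have hrk : r ≤ k := by omega
            exact ⟨t - u, by omega⟩
          have hb := stirling_bonus hp hp5 hdvd (j := M + r + 1) (by omega) hoddm
          exact (padicValNat_dvd_iff_le hApos.ne').mp hb
        -- arithmetic case split on r
        rcases Nat.lt_or_ge r 4 with hr4 | hr4
        · interval_cases r
          · -- r = 2
            have hw0 : padicValNat p (Nat.factorial 2) = 0 := by
              apply padicValNat.eq_zero_of_not_dvd
              intro hdd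
              rw [show Nat.factorial 2 = 2 from rfl] at hdd
              exact absurd (Nat.le_of_dvd (by norm_num) hdd) (by omega)
            have hA2 := hbonus (by decide)
            omega
          · -- r = 3
            have hw0 : padicValNat p (Nat.factorial 3) = 0 := by
              apply padicValNat.eq_zero_of_not_dvd
              intro hdd
              rw [show Nat.factorial 3 = 2 * 3 from rfl] at hdd
              rcases (Nat.Prime.dvd_mul hp).mp hdd with h' | h' <;>
                exact absurd (Nat.le_of_dvd (by norm_num) h') (by omega)
            omega
        · -- r ≥ 4 : Legendre bound (p-1) * w ≤ r
          set w := padicValNat p (Nat.factorial r) with hw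
          have hleg : (p - 1) * w ≤ r := by
            rw [hw, sub_one_mul_padicValNat_factorial]
            omega
          have h4w : 4 * w ≤ r :=
            le_trans (Nat.mul_le_mul_right w (by omega : 4 ≤ p - 1)) hleg
          have hm1 : r * nn ≤ r * padicValNat p N := Nat.mul_le_mul_left r hvN
          have ha1 : 4 * nn ≤ r * nn := Nat.mul_le_mul_right nn hr4
          have ha2 : r ≤ r * nn := Nat.le_mul_of_pos_right r (by omega : 0 < nn)
          omega
      have hcast : ((p ^ E : ℕ) : ℤ) ∣
          ((stirlingFirst N (M + r + 1) * (N ^ r * (M + r).choose M) : ℕ) : ℤ) :=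
        Int.natCast_dvd_natCast.mpr hnat
      push_cast at hcast
      have heq : (stirlingFirst N (M + r + 1) : ℤ) *
          ((-1 : ℤ) ^ (M + r) * ((N : ℤ) ^ r * ((M + r).choose M : ℤ)))
          = (-1 : ℤ) ^ (M + r) * ((stirlingFirst N (M + r + 1) : ℤ) *
            ((N : ℤ) ^ r * ((M + r).choose M : ℤ))) := by
        ring
      rw [heq]
      exact hcast.mul_left _
  rw [hT] at hdvdT
  have h4 := hdvdT.mul_left ((-1 : ℤ) ^ M)
  have h5 : (-1 : ℤ) ^ M * ((-1 : ℤ) ^ M *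
      ((N : ℤ) * ((N - k : ℕ) : ℤ) * s' - 2 * s))
      = (N : ℤ) * ((N - k : ℕ) : ℤ) * s' - 2 * s := by
    rw [← mul_assoc, ← mul_pow]
    norm_num
  rwa [h5] at h4

theorem stmt7 (p a n k : ℕ) (hp : p.Prime) (hp5 : 5 ≤ p)
    (ha : 1 ≤ a) (hn : 1 ≤ n) (hgcd : Nat.gcd a p = 1)
    (hkodd : Odd k) (hk1 : 1 ≤ k) (hk2 : k ≤ a * p ^ n - 1)
    (hval : 2 * n ≤ padicValNat p (stirlingFirst (a * p ^ n) (a * p ^ n - k + 1))) :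
    padicValNat p (stirlingFirst (a * p ^ n) (a * p ^ n - k)) ≥
      padicValNat p (a * p ^ n - k) + 3 * n := by
  haveI : Fact p.Prime := ⟨hp⟩
  set N := a * p ^ n with hN
  have hpn : 5 ≤ p ^ n := le_trans hp5 (Nat.le_self_pow (by omega) p)
  have hN5 : 5 ≤ N := le_trans hpn (Nat.le_mul_of_pos_left _ (by omega))
  have hN1 : 1 ≤ N := by omega
  have hkN : k < N := by omega
  have hdvd : p ^ n ∣ N := dvd_mul_left _ _
  have hm := master hp hp5 hn hdvd hkodd hk1 hk2 hN1
  set v := padicValNat p (N - k) with hv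
  have hs'pos : 0 < stirlingFirst N (N - k + 1) := stirlingFirst_pos (by omega) (by omega)
  have hspos : 0 < stirlingFirst N (N - k) := stirlingFirst_pos (by omega) (by omega)
  have h1 : p ^ (2 * n) ∣ stirlingFirst N (N - k + 1) :=
    (padicValNat_dvd_iff_le hs'pos.ne').mpr hval
  have h2 : (p : ℤ) ^ (3 * n + v) ∣
      (N : ℤ) * ((N - k : ℕ) : ℤ) * (stirlingFirst N (N - k + 1) : ℤ) := by
    have d1 : (p : ℤ) ^ n ∣ (N : ℤ) := by exact_mod_cast Int.natCast_dvd_natCast.mpr hdvd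
    have d2 : (p : ℤ) ^ v ∣ ((N - k : ℕ) : ℤ) := by
      exact_mod_cast Int.natCast_dvd_natCast.mpr (pow_padicValNat_dvd (p := p) (n := N - k))
    have d3 : (p : ℤ) ^ (2 * n) ∣ (stirlingFirst N (N - k + 1) : ℤ) := by
      exact_mod_cast Int.natCast_dvd_natCast.mpr h1
    have hexp : (p : ℤ) ^ (3 * n + v) = (p : ℤ) ^ n * (p : ℤ) ^ v * (p : ℤ) ^ (2 * n) := by
      rw [← pow_add, ← pow_add]
      congr 1
      omega
    rw [hexp]
    exact mul_dvd_mul (mul_dvd_mul d1 d2) d3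
  have h3 : (p : ℤ) ^ (3 * n + v) ∣ 2 * (stirlingFirst N (N - k) : ℤ) := by
    have h4 := dvd_sub h2 hm
    rwa [sub_sub_cancel] at h4
  have hcop : IsCoprime ((p : ℤ) ^ (3 * n + v)) 2 := by
    have hodd2 : Odd p := hp.odd_of_ne_two (by omega)
    have hcc : Nat.Coprime (p ^ (3 * n + v)) 2 := (Nat.coprime_two_right.mpr hodd2).pow_left _
    have := Nat.isCoprime_iff_coprime.mpr hcc
    push_cast at this
    exact this
  have h5 : (p : ℤ) ^ (3 * n + v) ∣ (stirlingFirst N (N - k) : ℤ) :=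
    hcop.dvd_of_dvd_mul_left h3
  have h6 : p ^ (3 * n + v) ∣ stirlingFirst N (N - k) := by
    have : ((p ^ (3 * n + v) : ℕ) : ℤ) ∣ (stirlingFirst N (N - k) : ℤ) := by push_cast; exact h5
    exact_mod_cast this
  have h7 := (padicValNat_dvd_iff_le hspos.ne').mp h6
  omega
end

section
/- Let p be an odd prime and let r ≥ 1 be an odd integer with p ≥ r+4. Then H(p-1, r) ≡ (1/r)·H_{p-1}^{(r)} (mod p^3), i.e., v_p(H(p-1,r) - (1/r)·H_{p-1}^{(r)}) ≥ 3 (with the convention that this difference may be zero). -/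
open Finset

/-- `H(n,k)`: the `k`-th elementary symmetric function of `1, 1/2, ..., 1/n`. -/
def elemSymH (n k : ℕ) : ℚ :=
  ∑ t ∈ (Finset.Icc 1 n).powersetCard k, ∏ i ∈ t, (1 : ℚ) / (i : ℚ)

/-- The generalized harmonic number `H_n^{(r)} = Σ_{i=1}^{n} 1/i^r`. -/
def genHarmonic (n r : ℕ) : ℚ := ∑ i ∈ Finset.Icc 1 n, (1 : ℚ) / (i : ℚ) ^ r



/-- `x` has `p`-adic valuation at least `k`. -/
def IsVal (p : ℕ) (k : ℕ) (x : ℚ) : Prop := ∃ a b : ℤ, ¬ (p:ℤ) ∣ b ∧ x * b = p^k * a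

namespace IsVal
variable {p : ℕ}

lemma not_dvd_one (hp : p.Prime) : ¬ (p:ℤ) ∣ (1:ℤ) := by
  intro h
  have := Int.le_of_dvd one_pos h
  have := hp.two_le
  omega

lemma zero (hp : p.Prime) (k : ℕ) : IsVal p k 0 :=
  ⟨0, 1, not_dvd_one hp, by simp⟩

lemma intCast (hp : p.Prime) (m : ℤ) : IsVal p 0 (m : ℚ) :=
  ⟨m, 1, not_dvd_one hp, by simp⟩

lemma one (hp : p.Prime) : IsVal p 0 1 := by simpa using intCast hp 1

lemma add {k x y} (hx : IsVal p k x) (hy : IsVal p k y) (hp : p.Prime) :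
    IsVal p k (x + y) := by
  obtain ⟨a1, b1, hb1, h1⟩ := hx
  obtain ⟨a2, b2, hb2, h2⟩ := hy
  refine ⟨a1 * b2 + a2 * b1, b1 * b2, ?_, ?_⟩
  · intro h
    rcases (Int.Prime.dvd_mul' (by exact_mod_cast hp) h) with h | h
    exacts [hb1 h, hb2 h]
  · push_cast
    ring_nf
    rw [show x * (b1:ℚ) * b2 = (x * b1) * b2 by ring, h1,
      show y * (b1:ℚ) * b2 = (y * b2) * b1 by ring, h2]
    push_cast
    ring

lemma mul {k l x y} (hx : IsVal p k x) (hy : IsVal p l y) (hp : p.Prime) :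
    IsVal p (k + l) (x * y) := by
  obtain ⟨a1, b1, hb1, h1⟩ := hx
  obtain ⟨a2, b2, hb2, h2⟩ := hy
  refine ⟨a1 * a2, b1 * b2, ?_, ?_⟩
  · intro h
    rcases (Int.Prime.dvd_mul' (by exact_mod_cast hp) h) with h | h
    exacts [hb1 h, hb2 h]
  · push_cast
    rw [show x * y * ((b1:ℚ) * b2) = (x * b1) * (y * b2) by ring, h1, h2]
    push_cast
    ring

lemma mono {k k' : ℕ} {x : ℚ} (hk : k' ≤ k) (hx : IsVal p k x) : IsVal p k' x := by
  obtain ⟨a, b, hb, h⟩ := hx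
  refine ⟨p ^ (k - k') * a, b, hb, ?_⟩
  rw [h]
  push_cast
  rw [← mul_assoc, ← pow_add]
  congr 2
  omega

lemma inv_nat (hp : p.Prime) {i : ℕ} (hi : 0 < i) (hpi : ¬ p ∣ i) :
    IsVal p 0 (1 / (i : ℚ)) := by
  refine ⟨1, i, by exact_mod_cast hpi, ?_⟩
  rw [one_div, pow_zero, one_mul]
  push_cast
  rw [inv_mul_cancel₀ (by exact_mod_cast hi.ne' : (i:ℚ) ≠ 0)]

/-- divide out a non-multiple of p -/
lemma of_mul_int (hp : p.Prime) {k : ℕ} {x : ℚ} {c : ℤ} (hc : ¬ (p:ℤ) ∣ c)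
    (h : IsVal p k ((c:ℚ) * x)) : IsVal p k x := by
  obtain ⟨a, b, hb, hh⟩ := h
  refine ⟨a, c * b, ?_, ?_⟩
  · intro hdvd
    rcases (Int.Prime.dvd_mul' (by exact_mod_cast hp) hdvd) with h | h
    exacts [hc h, hb h]
  · push_cast
    rw [show x * ((c:ℚ) * b) = ((c:ℚ) * x) * b by ring, hh]

lemma step {k : ℕ} {x : ℚ} {a b : ℤ} (hp : p.Prime) (hb : ¬ (p:ℤ) ∣ b) (hxe : x * b = p^k * a)
    (ha : (p:ℤ) ∣ a) : IsVal p (k+1) x := by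
  obtain ⟨c, rfl⟩ := ha
  refine ⟨c, b, hb, ?_⟩
  rw [hxe]
  push_cast
  ring

lemma padic {x} (hp : p.Prime) (h : IsVal p 3 x) :
    x = 0 ∨ padicValRat p x ≥ 3 := by
  rcases eq_or_ne x 0 with h0 | h0
  · exact Or.inl h0
  obtain ⟨a, b, hb, he⟩ := h
  haveI : Fact p.Prime := ⟨hp⟩
  right
  have hb0 : (b:ℚ) ≠ 0 := by
    intro h; apply hb; simp [show b = 0 by exact_mod_cast h]
  have ha0 : a ≠ 0 := by
    rintro rfl
    simp only [Int.cast_zero, mul_zero] at he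
    exact h0 ((mul_eq_zero.mp he).resolve_right hb0)
  have hvb : padicValRat p b = 0 := by
    rw [padicValRat.of_int]
    norm_cast
    exact padicValInt.eq_zero_of_not_dvd hb
  have hva : (0:ℤ) ≤ padicValRat p a := by
    rw [padicValRat.of_int]
    positivity
  have hpq : ((p:ℚ))^3 ≠ 0 := by
    have := hp.pos; positivity
  have ha0' : ((a:ℚ)) ≠ 0 := by exact_mod_cast ha0
  have h1 : padicValRat p (x * b) = padicValRat p x + padicValRat p b :=
    padicValRat.mul h0 hb0
  have h2 : padicValRat p (((p:ℚ))^3 * a) = padicValRat p ((p:ℚ)^3) + padicValRat p a :=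
    padicValRat.mul hpq ha0'
  have h3 : padicValRat p ((p:ℚ)^3) = 3 := by
    rw [padicValRat.pow, padicValRat.self hp.one_lt]
    ring
  rw [he] at h1
  rw [h1, h3] at h2
  omega

lemma sum {ι : Type*} {k : ℕ} {s : Finset ι} {f : ι → ℚ} (hp : p.Prime)
    (h : ∀ i ∈ s, IsVal p k (f i)) : IsVal p k (∑ i ∈ s, f i) := by
  classical
  induction s using Finset.induction with
  | empty => simpa using zero hp k
  | insert _ _ hne ih =>
    rw [Finset.sum_insert hne]
    exact (h _ (Finset.mem_insert_self _ _)).add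
      (ih fun i hi => h i (Finset.mem_insert_of_mem hi)) hp

lemma prod0 {ι : Type*} (hp : p.Prime) {s : Finset ι} {f : ι → ℚ}
    (h : ∀ i ∈ s, IsVal p 0 (f i)) : IsVal p 0 (∏ i ∈ s, f i) := by
  classical
  induction s using Finset.induction with
  | empty => simpa using one hp
  | insert _ _ hne ih =>
    rw [Finset.prod_insert hne]
    exact (h _ (Finset.mem_insert_self _ _)).mul
      (ih fun i hi => h i (Finset.mem_insert_of_mem hi)) hp

lemma pow0 (hp : p.Prime) {x : ℚ} (h : IsVal p 0 x) (n : ℕ) : IsVal p 0 (x^n) := by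
  induction n with
  | zero => simpa using one hp
  | succ k ih => rw [pow_succ]; exact ih.mul h hp

lemma sign (hp : p.Prime) (s : ℕ) : IsVal p 0 ((-1:ℚ)^s) := by
  rcases Nat.even_or_odd s with h | h
  · rw [h.neg_one_pow]; exact one hp
  · rw [h.neg_one_pow]; simpa using intCast hp (-1)

lemma p_pow_mul (hp : p.Prime) {k : ℕ} {x : ℚ} (s : ℕ) (h : IsVal p k x) :
    IsVal p (s + k) ((p:ℚ)^s * x) := by
  have hs : IsVal p s ((p:ℚ)^s) := ⟨1, 1, by
      intro hh
      have := Int.le_of_dvd one_pos hh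
      have := hp.two_le
      omega, by push_cast; ring⟩
  exact hs.mul h hp

end IsVal


lemma elemSymH_zero (n : ℕ) : elemSymH n 0 = 1 := by
  simp [elemSymH]

lemma aeval_esymm_eq (n j : ℕ) :
    (MvPolynomial.aeval (fun i : {x // x ∈ Finset.Icc 1 n} => (1:ℚ)/(i:ℕ)))
      (MvPolynomial.esymm {x // x ∈ Finset.Icc 1 n} ℚ j) = elemSymH n j := by
  rw [MvPolynomial.aeval_esymm_eq_multiset_esymm]
  have h1 : (univ : Finset {x // x ∈ Finset.Icc 1 n}).val.map
      (fun i : {x // x ∈ Finset.Icc 1 n} => (1:ℚ)/(i:ℕ))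
      = (Finset.Icc 1 n).val.map (fun i : ℕ => (1:ℚ)/i) := by
    rw [Finset.univ_eq_attach]
    have : (Finset.Icc 1 n).attach.val.map (fun i : {x // x ∈ Finset.Icc 1 n} => (1:ℚ)/(i:ℕ))
        = ((Finset.Icc 1 n).attach.val.map Subtype.val).map (fun i : ℕ => (1:ℚ)/i) := by
      rw [Multiset.map_map]; rfl
    rw [this]
    congr 1
    exact congrArg Finset.val (Finset.attach_map_val (s := Finset.Icc 1 n))
  rw [h1, Finset.esymm_map_val]
  rfl

lemma aeval_psum_eq (n j : ℕ) :
    (MvPolynomial.aeval (fun i : {x // x ∈ Finset.Icc 1 n} => (1:ℚ)/(i:ℕ)))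
      (MvPolynomial.psum {x // x ∈ Finset.Icc 1 n} ℚ j) = genHarmonic n j := by
  rw [MvPolynomial.psum, map_sum]
  simp only [map_pow, MvPolynomial.aeval_X]
  rw [Finset.univ_eq_attach]
  rw [Finset.sum_attach (Finset.Icc 1 n) (fun i : ℕ => ((1:ℚ)/i)^j)]
  simp [genHarmonic, div_pow]

lemma neg_one_pow_congr' {s t : ℕ} (h : s % 2 = t % 2) : (-1:ℚ)^s = (-1:ℚ)^t := by
  rcases Nat.even_or_odd s with hs | hs
  · rw [Even.neg_one_pow hs, Even.neg_one_pow (by rcases hs with ⟨c,hc⟩; exact (Nat.even_iff).2 (by omega))]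
  · rw [Odd.neg_one_pow hs, Odd.neg_one_pow (by rcases hs with ⟨c,hc⟩; exact (Nat.odd_iff).2 (by omega))]

lemma newton (n k : ℕ) (hk : 1 ≤ k) :
    (k:ℚ) * elemSymH n k
      = ∑ j ∈ Finset.Icc 1 k, (-1:ℚ)^(j+1) * elemSymH n (k-j) * genHarmonic n j := by
  have H := @MvPolynomial.mul_esymm_eq_sum {x // x ∈ Finset.Icc 1 n} (FinsetCoe.fintype _) ℚ _ k
  have H2 := congrArg (MvPolynomial.aeval (fun i : {x // x ∈ Finset.Icc 1 n} => (1:ℚ)/(i:ℕ))) H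
  simp only [map_mul, map_sum, map_pow, map_neg, map_one, map_natCast] at H2
  simp only [aeval_esymm_eq, aeval_psum_eq] at H2
  rw [H2]
  rw [Finset.mul_sum]
  rw [Finset.sum_nbij' (i := fun (a : ℕ × ℕ) => a.2) (j := fun j => (k - j, j))]
  · intro a ha
    simp only [Finset.mem_filter, Finset.HasAntidiagonal.mem_antidiagonal] at ha
    simp only [Finset.mem_Icc]
    omega
  · intro j hj
    simp only [Finset.mem_Icc] at hj
    simp only [Finset.mem_filter, Finset.HasAntidiagonal.mem_antidiagonal]
    omega
  · intro a ha
    simp only [Finset.mem_filter, Finset.HasAntidiagonal.mem_antidiagonal] at ha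
    ext <;> simp <;> omega
  · intro j hj; rfl
  · intro a ha
    simp only [Finset.mem_filter, Finset.HasAntidiagonal.mem_antidiagonal] at ha
    have h1 : k - a.2 = a.1 := by omega
    rw [h1]
    have hsgn : (-1:ℚ)^(k+1) * (-1:ℚ)^(a.1) = (-1:ℚ)^(a.2+1) := by
      rw [← pow_add]
      exact neg_one_pow_congr' (by omega)
    rw [← hsgn]
    ring





lemma key_sum (p : ℕ) [hp : Fact p.Prime] (a b : ℕ) (hab : a < b) (hnd : ¬ (p-1) ∣ (b-a)) :
    ∑ i ∈ Finset.Icc 1 (p-1), ((i:ZMod p))^a * (((i:ZMod p))⁻¹)^b = 0 := by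
  classical
  have hp2 : 2 ≤ p := hp.out.two_le
  -- convert to sum over units
  have h1 : ∑ i ∈ Finset.Icc 1 (p-1), ((i:ZMod p))^a * (((i:ZMod p))⁻¹)^b
      = ∑ u : (ZMod p)ˣ, ((u:ZMod p))^a * (((u:ZMod p))⁻¹)^b := by
    apply Finset.sum_nbij'
      (i := fun i : ℕ => if h : IsUnit ((i : ZMod p)) then h.unit else 1)
      (j := fun u : (ZMod p)ˣ => ((u:ZMod p)).val)
    · intro i _; exact Finset.mem_univ _
    · intro u _
      simp only [Finset.mem_Icc]
      have hlt : ((u:ZMod p)).val < p := ZMod.val_lt _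
      have hne : ((u:ZMod p)).val ≠ 0 := by
        rw [Ne, ZMod.val_eq_zero]
        exact Units.ne_zero u
      omega
    · intro i hi
      simp only [Finset.mem_Icc] at hi
      have hne : ((i:ZMod p)) ≠ 0 := by
        rw [Ne, ZMod.natCast_eq_zero_iff]
        intro hdvd
        have := Nat.le_of_dvd (by omega) hdvd
        omega
      have hu : IsUnit ((i:ZMod p)) := hne.isUnit
      rw [dif_pos hu]
      rw [hu.unit_spec]
      exact ZMod.val_natCast_of_lt (by omega)
    · intro u _
      have hu : IsUnit (((((u:ZMod p)).val : ℕ)) : ZMod p) := by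
        rw [ZMod.natCast_zmod_val]
        exact u.isUnit
      rw [dif_pos hu]
      ext
      rw [hu.unit_spec, ZMod.natCast_zmod_val]
    · intro i hi
      simp only [Finset.mem_Icc] at hi
      have hne : ((i:ZMod p)) ≠ 0 := by
        rw [Ne, ZMod.natCast_eq_zero_iff]
        intro hdvd
        have := Nat.le_of_dvd (by omega) hdvd
        omega
      have hu : IsUnit ((i:ZMod p)) := hne.isUnit
      rw [dif_pos hu, hu.unit_spec]
  rw [h1]
  have h2 : ∀ u : (ZMod p)ˣ, ((u:ZMod p))^a * (((u:ZMod p))⁻¹)^b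
      = (((u⁻¹^(b-a) : (ZMod p)ˣ)) : ZMod p) := by
    intro u
    have : (u⁻¹)^b = (u⁻¹)^a * (u⁻¹)^(b-a) := by
      rw [← pow_add]
      congr 1
      omega
    rw [← Units.val_pow_eq_pow_val, ← Units.val_inv_eq_inv_val, ← Units.val_pow_eq_pow_val,
      ← Units.val_mul, this, ← mul_assoc, ← mul_pow, mul_inv_cancel, one_pow, one_mul,
      inv_pow]
  simp_rw [h2]
  have h3 : ∑ u : (ZMod p)ˣ, (((u⁻¹^(b-a) : (ZMod p)ˣ)) : ZMod p)
      = ∑ u : (ZMod p)ˣ, (((u^(b-a) : (ZMod p)ˣ)) : ZMod p) := by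
    apply Fintype.sum_equiv (Equiv.inv (ZMod p)ˣ)
    intro u
    simp
  rw [h3]
  have h4 := FiniteField.sum_pow_units (ZMod p) (b-a)
  rw [ZMod.card] at h4
  simp_rw [Units.val_pow_eq_pow_val] at h4 ⊢
  rw [h4, if_neg hnd]


lemma not_p_dvd_factorial {p : ℕ} (hp : p.Prime) : ¬ (p:ℤ) ∣ ((p-1).factorial : ℤ) := by
  rw [Int.natCast_dvd_natCast, hp.dvd_factorial]
  have := hp.two_le
  omega

lemma fact_div_cast_rat {p i : ℕ} (hi : 1 ≤ i) (hi2 : i ≤ p-1) :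
    (((p-1).factorial / i : ℕ) : ℚ) = ((p-1).factorial : ℚ) / i := by
  rw [Nat.cast_div (Nat.dvd_factorial (by omega) (by omega))]
  exact_mod_cast (by omega : i ≠ 0)

lemma fact_div_cast_zmod {p i : ℕ} [Fact p.Prime] (hi : 1 ≤ i) (hi2 : i ≤ p-1) :
    (((p-1).factorial / i : ℕ) : ZMod p) = ((p-1).factorial : ZMod p) * ((i : ZMod p))⁻¹ := by
  have hne : ((i : ZMod p)) ≠ 0 := by
    rw [Ne, ZMod.natCast_eq_zero_iff]
    intro h
    have hp2 := (Fact.out : p.Prime).two_le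
    have := Nat.le_of_dvd (by omega) h
    omega
  have h1 : (((p-1).factorial / i : ℕ) : ZMod p) * (i : ZMod p) = ((p-1).factorial : ZMod p) := by
    rw [← Nat.cast_mul, Nat.div_mul_cancel (Nat.dvd_factorial (by omega) (by omega))]
  rw [eq_mul_inv_iff_mul_eq₀ hne]
  exact h1

lemma genHarmonic_val1 {p m : ℕ} (hp : p.Prime) (hm1 : 1 ≤ m) (hm2 : m ≤ p-2) :
    IsVal p 1 (genHarmonic (p-1) m) := by
  haveI : Fact p.Prime := ⟨hp⟩
  have hp2 := hp.two_le
  apply IsVal.step (k := 0) hp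
    (a := ∑ i ∈ Finset.Icc 1 (p-1), (((p-1).factorial / i : ℕ) : ℤ)^m)
    (b := ((p-1).factorial : ℤ)^m)
  · intro h
    exact not_p_dvd_factorial hp
      ((Nat.prime_iff_prime_int.mp hp).dvd_of_dvd_pow h)
  · rw [genHarmonic, pow_zero, one_mul, Finset.sum_mul]
    rw [Int.cast_sum]
    simp only [Int.cast_pow, Int.cast_natCast]
    apply Finset.sum_congr rfl
    intro i hi
    simp only [Finset.mem_Icc] at hi
    rw [fact_div_cast_rat hi.1 hi.2, div_pow, one_div, inv_mul_eq_div]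
  · rw [← ZMod.intCast_zmod_eq_zero_iff_dvd]
    rw [Int.cast_sum]
    simp only [Int.cast_pow, Int.cast_natCast]
    have hterm : ∀ i ∈ Finset.Icc 1 (p-1),
        ((((p-1).factorial / i : ℕ) : ZMod p))^m
          = ((p-1).factorial : ZMod p)^m * (((i:ZMod p))^0 * (((i:ZMod p))⁻¹)^m) := by
      intro i hi
      simp only [Finset.mem_Icc] at hi
      rw [fact_div_cast_zmod hi.1 hi.2, mul_pow, pow_zero, one_mul]
    rw [Finset.sum_congr rfl hterm, ← Finset.mul_sum,
      key_sum p 0 m (by omega) (by intro h; have := Nat.le_of_dvd (by omega) h; omega),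
      mul_zero]


lemma binom_aux (x y : ℤ) (m : ℕ) : ∃ z : ℤ, (x+y)^m = x^m + m*x^(m-1)*y + y^2*z := by
  induction m with
  | zero => exact ⟨0, by norm_num⟩
  | succ k ih =>
    obtain ⟨z, hz⟩ := ih
    refine ⟨k*x^(k-1) + z*x + z*y, ?_⟩
    have hx : (k:ℤ) * x^(k-1) * x = k * x^k := by
      cases k with
      | zero => simp
      | succ j => rw [show j+1-1 = j from rfl]; push_cast; ring
    rw [pow_succ]
    rw [show k+1-1 = k from rfl]
    push_cast
    push_cast at hx hz
    linear_combination (x + y) * hz + y * hx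

lemma not_p_dvd_fact_pow {p : ℕ} (hp : p.Prime) (s : ℕ) :
    ¬ (p:ℤ) ∣ ((p-1).factorial : ℤ)^s := by
  intro h
  exact not_p_dvd_factorial hp ((Nat.prime_iff_prime_int.mp hp).dvd_of_dvd_pow h)

lemma icc_ne_zero {p i : ℕ} (hp : p.Prime) (h1 : 1 ≤ i) (h2 : i ≤ p-1) : ((i:ℚ)) ≠ 0 := by
  exact_mod_cast (by omega : i ≠ 0)

lemma icc_not_dvd {p i : ℕ} (hp : p.Prime) (h1 : 1 ≤ i) (h2 : i ≤ p-1) : ¬ p ∣ i := by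
  intro h
  have hp2 := hp.two_le
  have := Nat.le_of_dvd (by omega) h
  omega

lemma inv_prod_val0 {p i m : ℕ} (hp : p.Prime) (h1 : 1 ≤ i) (h2 : i ≤ p-1) :
    IsVal p 0 (1/((i:ℚ)^m * ((p-i:ℕ):ℚ)^m)) := by
  have hp2 := hp.two_le
  have key : (1:ℚ)/((i:ℚ)^m * ((p-i:ℕ):ℚ)^m) = (1/(i:ℚ))^m * (1/((p-i:ℕ):ℚ))^m := by
    rw [div_pow, div_pow, div_mul_div_comm]
    norm_num
  rw [key]
  exact ((IsVal.inv_nat hp (by omega) (icc_not_dvd hp h1 h2)).pow0 hp m).mul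
    ((IsVal.inv_nat hp (p := p) (i := p - i) (by omega)
      (icc_not_dvd hp (by omega) (by omega))).pow0 hp m) hp

lemma pmi_cast {p i : ℕ} [Fact p.Prime] (hle : i ≤ p) :
    (((p - i : ℕ)) : ZMod p) = -(i : ZMod p) := by
  rw [Nat.cast_sub hle, ZMod.natCast_self, zero_sub]

lemma genHarmonic_val2 {p m : ℕ} (hp : p.Prime) (hmodd : Odd m) (hmp : m + 4 ≤ p) :
    IsVal p 2 (genHarmonic (p-1) m) := by
  haveI : Fact p.Prime := ⟨hp⟩
  have hm1 : 1 ≤ m := hmodd.pos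
  have hp5 : 5 ≤ m + 4 := by omega
  -- Step 1: choose the binomial correction terms
  have hzex : ∀ i : ℕ, ∃ z : ℤ, 1 ≤ i → i ≤ p-1 →
      (((p-i : ℕ)):ℚ)^m + (i:ℚ)^m = p * ((m:ℚ) * (i:ℚ)^(m-1)) + p^2 * z := by
    intro i
    rcases binom_aux (-(i:ℤ)) (p:ℤ) m with ⟨z, hz⟩
    refine ⟨z, fun h1 h2 => ?_⟩
    have hle : i ≤ p := by omega
    have hint : (((p-i:ℕ)):ℤ)^m + (i:ℤ)^m = p * (m * (i:ℤ)^(m-1)) + p^2 * z := by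
      have hcast : (((p - i : ℕ)):ℤ) = -(i:ℤ) + p := by
        rw [Nat.cast_sub hle]; ring
      rw [hcast, hz, hmodd.neg_pow, (Nat.Odd.sub_odd hmodd odd_one).neg_pow]
      ring
    exact_mod_cast hint
  choose Z hZ using hzex
  -- Step 2: reindex i ↦ p - i
  have hrev : genHarmonic (p-1) m = ∑ i ∈ Finset.Icc 1 (p-1), (1:ℚ)/((p-i:ℕ):ℚ)^m := by
    rw [genHarmonic]
    apply Finset.sum_nbij' (i := fun i => p - i) (j := fun i => p - i)
    · intro a ha; simp only [mem_Icc] at *; omega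
    · intro a ha; simp only [mem_Icc] at *; omega
    · intro a ha; simp only [mem_Icc] at *; omega
    · intro a ha; simp only [mem_Icc] at *; omega
    · intro a ha
      simp only [mem_Icc] at ha
      have h : p - (p - a) = a := by omega
      rw [h]
  -- Step 3: the key decomposition
  have hkey : (2:ℚ) * genHarmonic (p-1) m
      = p * ((m:ℚ) * ∑ i ∈ Finset.Icc 1 (p-1), (i:ℚ)^(m-1) * (1/((i:ℚ)^m * ((p-i:ℕ):ℚ)^m)))
        + p^2 * ∑ i ∈ Finset.Icc 1 (p-1), (Z i : ℚ) * (1/((i:ℚ)^m * ((p-i:ℕ):ℚ)^m)) := by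
    rw [two_mul]
    nth_rewrite 2 [hrev]
    rw [genHarmonic, ← Finset.sum_add_distrib, Finset.mul_sum, Finset.mul_sum, Finset.mul_sum,
      ← Finset.sum_add_distrib]
    apply Finset.sum_congr rfl
    intro i hi
    simp only [mem_Icc] at hi
    have h1 : (i:ℚ) ≠ 0 := icc_ne_zero hp hi.1 hi.2
    have h2 : ((p-i:ℕ):ℚ) ≠ 0 := icc_ne_zero hp (by omega) (by omega)
    have hnum := hZ i hi.1 hi.2
    have hD : ((i:ℚ)^m * ((p-i:ℕ):ℚ)^m) ≠ 0 := by positivity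
    rw [div_add_div _ _ (pow_ne_zero m h1) (pow_ne_zero m h2)]
    rw [div_eq_iff hD]
    field_simp
    linear_combination hnum
  -- Step 4: S has valuation ≥ 1
  have hS : IsVal p 1 (∑ i ∈ Finset.Icc 1 (p-1), (i:ℚ)^(m-1) * (1/((i:ℚ)^m * ((p-i:ℕ):ℚ)^m))) := by
    apply IsVal.step (k := 0) hp
      (a := ∑ i ∈ Finset.Icc 1 (p-1), (i:ℤ)^(m-1) * ((((p-1).factorial / i : ℕ)):ℤ)^m
        * ((((p-1).factorial / (p-i) : ℕ)):ℤ)^m)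
      (b := ((p-1).factorial : ℤ)^(2*m))
    · exact not_p_dvd_fact_pow hp _
    · rw [pow_zero, one_mul, Finset.sum_mul, Int.cast_sum]
      apply Finset.sum_congr rfl
      intro i hi
      simp only [mem_Icc] at hi
      have h1 : (i:ℚ) ≠ 0 := icc_ne_zero hp hi.1 hi.2
      have h2 : ((p-i:ℕ):ℚ) ≠ 0 := icc_ne_zero hp (by omega) (by omega)
      simp only [Int.cast_mul, Int.cast_pow, Int.cast_natCast]
      rw [fact_div_cast_rat hi.1 hi.2,
        fact_div_cast_rat (p := p) (i := p - i) (by omega) (by omega),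
        two_mul, pow_add, div_pow, div_pow]
      field_simp
    · rw [← ZMod.intCast_zmod_eq_zero_iff_dvd, Int.cast_sum]
      have hterm : ∀ i ∈ Finset.Icc 1 (p-1),
          (((i:ℤ)^(m-1) * ((((p-1).factorial / i : ℕ)):ℤ)^m
            * ((((p-1).factorial / (p-i) : ℕ)):ℤ)^m : ℤ) : ZMod p)
          = -(((p-1).factorial : ZMod p)^(2*m))
            * ((i:ZMod p)^(m-1) * (((i:ZMod p))⁻¹)^(2*m)) := by
        intro i hi
        simp only [mem_Icc] at hi
        simp only [Int.cast_mul, Int.cast_pow, Int.cast_natCast]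
        rw [fact_div_cast_zmod hi.1 hi.2,
          fact_div_cast_zmod (p := p) (i := p - i) (by omega) (by omega),
          pmi_cast (by omega), inv_neg]
        rw [mul_pow, mul_pow, neg_pow, hmodd.neg_one_pow]
        rw [two_mul, pow_add]
        ring
      rw [Finset.sum_congr rfl hterm, ← Finset.mul_sum,
        key_sum p (m-1) (2*m) (by omega)
          (by intro h; have := Nat.le_of_dvd (by omega) h; omega),
        mul_zero]
  -- Step 5: assemble
  have hT : IsVal p 0 (∑ i ∈ Finset.Icc 1 (p-1), (Z i : ℚ) * (1/((i:ℚ)^m * ((p-i:ℕ):ℚ)^m))) := by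
    apply IsVal.sum hp
    intro i hi
    simp only [mem_Icc] at hi
    exact (IsVal.intCast hp (Z i)).mul (inv_prod_val0 hp hi.1 hi.2) hp
  have h2H : IsVal p 2 ((2:ℚ) * genHarmonic (p-1) m) := by
    rw [hkey]
    apply IsVal.add ?_ ?_ hp
    · have hms : IsVal p 1 ((m:ℚ) * ∑ i ∈ Finset.Icc 1 (p-1),
          (i:ℚ)^(m-1) * (1/((i:ℚ)^m * ((p-i:ℕ):ℚ)^m))) := by
        have := (IsVal.intCast hp (m:ℤ)).mul hS hp
        push_cast at this
        exact this
      have := IsVal.p_pow_mul hp 1 hms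
      rw [pow_one] at this
      exact this
    · exact IsVal.p_pow_mul hp 2 hT
  have : IsVal p 2 (((2:ℤ):ℚ) * genHarmonic (p-1) m) := by push_cast; exact h2H
  apply IsVal.of_mul_int hp (c := 2) ?_ this
  intro h
  have h2 := Int.le_of_dvd (by norm_num) h
  have h5 : (5:ℤ) ≤ (p:ℤ) := by exact_mod_cast (by omega : 5 ≤ p)
  omega

lemma elemSymH_val0 {p : ℕ} (hp : p.Prime) (j : ℕ) : IsVal p 0 (elemSymH (p-1) j) := by
  rw [elemSymH]
  apply IsVal.sum hp
  intro t ht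
  apply IsVal.prod0 hp
  intro i hi
  have hmem : i ∈ Finset.Icc 1 (p-1) := (Finset.mem_powersetCard.mp ht).1 hi
  simp only [mem_Icc] at hmem
  exact IsVal.inv_nat hp (by omega) (icc_not_dvd hp hmem.1 hmem.2)

lemma elemSymH_val1 {p j : ℕ} (hp : p.Prime) (hj1 : 1 ≤ j) (hj2 : j ≤ p-2) :
    IsVal p 1 (elemSymH (p-1) j) := by
  have hp2 := hp.two_le
  apply IsVal.of_mul_int hp (c := j)
    (by exact_mod_cast icc_not_dvd hp hj1 (by omega))
  have hcast : (((j:ℤ)):ℚ) = (j:ℚ) := by push_cast; rfl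
  rw [hcast, newton (p-1) j hj1]
  apply IsVal.sum hp
  intro i hi
  simp only [mem_Icc] at hi
  have h1 := IsVal.sign hp (i+1)
  have h2 := elemSymH_val0 hp (j - i)
  have h3 := genHarmonic_val1 hp hi.1 (le_trans hi.2 hj2)
  exact IsVal.mono (by norm_num) ((h1.mul h2 hp).mul h3 hp)

lemma elemSymH_val2 {p j : ℕ} (hp : p.Prime) (hjodd : Odd j) (hjp : j + 4 ≤ p) :
    IsVal p 2 (elemSymH (p-1) j) := by
  have hp2 := hp.two_le
  have hj1 : 1 ≤ j := hjodd.pos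
  apply IsVal.of_mul_int hp (c := j)
    (by exact_mod_cast icc_not_dvd hp hj1 (by omega))
  have hcast : (((j:ℤ)):ℚ) = (j:ℚ) := by push_cast; rfl
  rw [hcast, newton (p-1) j hj1]
  apply IsVal.sum hp
  intro i hi
  simp only [mem_Icc] at hi
  have h1 := IsVal.sign hp (i+1)
  rcases Nat.even_or_odd i with hie | hio
  · -- i even : e (j-i) odd has val ≥ 1, H i has val ≥ 1
    have hilt : i < j := by
      rcases hie with ⟨c, hc⟩; rcases hjodd with ⟨d, hd⟩; omega
    have h2 : IsVal p 1 (elemSymH (p-1) (j - i)) := by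
      apply elemSymH_val1 hp (by omega) (by omega)
    have h3 : IsVal p 1 (genHarmonic (p-1) i) := genHarmonic_val1 hp hi.1 (by omega)
    exact IsVal.mono (by norm_num) ((h1.mul h2 hp).mul h3 hp)
  · -- i odd : H i has val ≥ 2
    have h2 := elemSymH_val0 hp (j - i)
    have h3 : IsVal p 2 (genHarmonic (p-1) i) := genHarmonic_val2 hp hio (by omega)
    exact IsVal.mono (by norm_num) ((h1.mul h2 hp).mul h3 hp)

theorem stmt11 (p r : ℕ) (hp : p.Prime) (hodd : Odd p)
    (hr1 : 1 ≤ r) (hrodd : Odd r) (hpr : r + 4 ≤ p) :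
    elemSymH (p - 1) r = (1 / (r : ℚ)) * genHarmonic (p - 1) r ∨
    padicValRat p (elemSymH (p - 1) r - (1 / (r : ℚ)) * genHarmonic (p - 1) r) ≥ 3 := by
  have hp2 := hp.two_le
  have hp5 : 5 ≤ p := by omega
  -- split off the top term of Newton's identity
  have hN := newton (p-1) r hr1
  have htop : Finset.Icc 1 r = insert r (Finset.Icc 1 (r-1)) := by
    ext x
    simp only [mem_Icc, Finset.mem_insert]
    omega
  rw [htop, Finset.sum_insert (by simp only [mem_Icc]; omega)] at hN
  have htopval : (-1:ℚ)^(r+1) * elemSymH (p-1) (r-r) * genHarmonic (p-1) r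
      = genHarmonic (p-1) r := by
    rw [Nat.sub_self, elemSymH_zero, Even.neg_one_pow (hrodd.add_odd odd_one)]
    ring
  rw [htopval] at hN
  have hdiff : (r:ℚ) * elemSymH (p-1) r - genHarmonic (p-1) r
      = ∑ j ∈ Finset.Icc 1 (r-1), (-1:ℚ)^(j+1) * elemSymH (p-1) (r-j) * genHarmonic (p-1) j := by
    rw [hN]; ring
  have hval : IsVal p 3 ((r:ℚ) * elemSymH (p-1) r - genHarmonic (p-1) r) := by
    rw [hdiff]
    apply IsVal.sum hp
    intro j hj
    simp only [mem_Icc] at hj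
    have h1 := IsVal.sign hp (j+1)
    rcases Nat.even_or_odd j with hje | hjo
    · -- j even : e (r-j) odd val ≥ 2, H j val ≥ 1
      have hj2 : 2 ≤ j := by rcases hje with ⟨c, hc⟩; omega
      have h2 : IsVal p 2 (elemSymH (p-1) (r-j)) := by
        apply elemSymH_val2 hp (Nat.Odd.sub_even (by omega) hrodd hje) (by omega)
      have h3 : IsVal p 1 (genHarmonic (p-1) j) := genHarmonic_val1 hp (by omega) (by omega)
      exact IsVal.mono (by norm_num) ((h1.mul h2 hp).mul h3 hp)
    · -- j odd : e (r-j) even val ≥ 1, H j val ≥ 2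
      have hjlt : j ≤ r - 2 := by rcases hjo with ⟨c, hc⟩; rcases hrodd with ⟨d, hd⟩; omega
      have h2 : IsVal p 1 (elemSymH (p-1) (r-j)) := elemSymH_val1 hp (by omega) (by omega)
      have h3 : IsVal p 2 (genHarmonic (p-1) j) := genHarmonic_val2 hp hjo (by omega)
      exact IsVal.mono (by norm_num) ((h1.mul h2 hp).mul h3 hp)
  have hr0 : (r:ℚ) ≠ 0 := by exact_mod_cast (by omega : r ≠ 0)
  have hx : ((r:ℤ):ℚ) * (elemSymH (p-1) r - (1/(r:ℚ)) * genHarmonic (p-1) r)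
      = (r:ℚ) * elemSymH (p-1) r - genHarmonic (p-1) r := by
    push_cast
    field_simp
  have hfin : IsVal p 3 (elemSymH (p-1) r - (1/(r:ℚ)) * genHarmonic (p-1) r) := by
    apply IsVal.of_mul_int hp (c := r)
      (by exact_mod_cast icc_not_dvd hp hr1 (by omega))
    rw [hx]
    exact hval
  rcases IsVal.padic hp hfin with h | h
  · left
    linarith [sub_eq_zero.mp h]
  · right
    exact h
end

section
/- Let p ≥ 5 be a prime and let a and n be positive integers with gcd(a,p) = 1. For any even integer k with 0 ≤ k ≤ ap^n, one has s_{p^n}(ap^n, ap^n - k) ≡ s(ap^n, ap^n - k) (mod p^{2n}), where s_{p^n} denotes the p^n-th Stirling numbers of the first kind and s denotes the Stirling numbers of the first kind. -/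
/-- The `m`-th Stirling number of the first kind `s_m(n,k)`, defined by
`(x+m)(x+m+1)⋯(x+m+n-1) = Σ_{k=0}^{n} s_m(n,k) x^k`. -/
noncomputable def stirlingFirstShift (m n k : ℕ) : ℕ :=
  (∏ i ∈ Finset.range n, (Polynomial.X + Polynomial.C (m + i))).coeff k

open Polynomial Finset

/-- `ascPochhammer` composed with `X + C r` is the shifted product. -/
lemma aux_asc_comp {R : Type*} [CommRing R] (r : R) (n : ℕ) :
    (ascPochhammer R n).comp (X + C r) = ∏ i ∈ range n, (X + C (r + (i : R))) := by
  induction n with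
  | zero => simp
  | succ n ih =>
      rw [ascPochhammer_succ_right, mul_comp, ih, prod_range_succ]
      congr 1
      simp [add_comp]
      ring

/-- `ascPochhammer` as a product. -/
lemma aux_asc_prod (R : Type*) [CommRing R] (n : ℕ) :
    ascPochhammer R n = ∏ i ∈ range n, (X + C ((i : R))) := by
  have := aux_asc_comp (0 : R) n
  simpa using this

/-- Evaluation at a square-zero element. -/
lemma aux_eval_sq_zero {R : Type*} [CommRing R] (g : R[X]) (e : R) (he : e ^ 2 = 0) :
    g.eval e = g.coeff 0 + g.coeff 1 * e := by
  induction g using Polynomial.induction_on' with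
  | add p q hp hq => simp [hp, hq]; ring
  | monomial n a =>
      match n with
      | 0 => simp
      | 1 => simp
      | (m + 2) =>
          have : e ^ (m + 2) = 0 := by
            have : e ^ (m + 2) = e ^ 2 * e ^ m := by ring
            rw [this, he, zero_mul]
          simp [coeff_monomial, this]

/-- Taylor coefficient at a square-zero element. -/
lemma aux_taylor_coeff {R : Type*} [CommRing R] (g : R[X]) (e : R) (he : e ^ 2 = 0) (k : ℕ) :
    (Polynomial.taylor e g).coeff k = g.coeff k + (k + 1 : ℕ) * g.coeff (k + 1) * e := by
  rw [taylor_coeff, aux_eval_sq_zero _ _ he, hasseDeriv_coeff, hasseDeriv_coeff]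
  have h1 : (0 + k).choose k = 1 := by rw [Nat.zero_add]; exact Nat.choose_self k
  have h2 : (1 + k).choose k = k + 1 := by
    rw [Nat.add_comm]; exact Nat.choose_succ_self_right k
  rw [h1, h2, Nat.zero_add, Nat.add_comm 1 k]
  push_cast
  ring

/-- coefficients of products of `X - C (c i)` versus `X + C (c i)`. -/
lemma aux_coeff_prod_neg {R : Type*} [CommRing R] (c : ℕ → R) (n : ℕ) (j : ℕ) :
    (∏ i ∈ range n, (X - C (c i))).coeff j
      = (-1) ^ (n + j) * (∏ i ∈ range n, (X + C (c i))).coeff j := by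
  induction n generalizing j with
  | zero =>
      simp only [range_zero, prod_empty, coeff_one]
      rcases Nat.eq_zero_or_pos j with h | h
      · simp [h]
      · simp [Nat.pos_iff_ne_zero.mp h]
  | succ n ih =>
      rw [prod_range_succ, prod_range_succ]
      rcases j with _ | j
      · -- coefficient 0
        rw [mul_coeff_zero, mul_coeff_zero, ih 0]
        have hx : (X - C (c n)).coeff 0 = -(c n) := by rw [coeff_sub, coeff_X_zero, coeff_C_zero, zero_sub]
        have hy : (X + C (c n)).coeff 0 = c n := by rw [coeff_add, coeff_X_zero, coeff_C_zero, zero_add]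
        rw [hx, hy, show n + 1 + 0 = (n + 0) + 1 by ring, pow_succ]
        ring
      · have hsub : ((∏ i ∈ range n, (X - C (c i))) * (X - C (c n))).coeff (j + 1)
            = (∏ i ∈ range n, (X - C (c i))).coeff j
              - (∏ i ∈ range n, (X - C (c i))).coeff (j + 1) * c n := coeff_mul_X_sub_C
        have hadd : ((∏ i ∈ range n, (X + C (c i))) * (X + C (c n))).coeff (j + 1)
            = (∏ i ∈ range n, (X + C (c i))).coeff j
              + (∏ i ∈ range n, (X + C (c i))).coeff (j + 1) * c n := by
          rw [mul_add, coeff_add, coeff_mul_X, mul_comm _ (C (c n)), coeff_C_mul, mul_comm]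
        rw [hsub, hadd, ih j, ih (j + 1)]
        have h1 : (-1 : R) ^ (n + j) = (-1) ^ (n + 1 + (j + 1)) := by
          rw [show n + 1 + (j + 1) = (n + j) + 2 by ring]
          rw [pow_succ, pow_succ, mul_neg_one, mul_neg_one, neg_neg]
        have h2 : (-1 : R) ^ (n + (j + 1)) = -(-1) ^ (n + 1 + (j + 1)) := by
          rw [show n + 1 + (j + 1) = (n + (j + 1)) + 1 by ring]
          rw [pow_succ, mul_neg_one, neg_neg]
        rw [h1, h2]
        ring

/-- Key lemma: `p^n` divides odd-parity coefficients of the Pochhammer polynomial. -/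
lemma aux_key (p a n : ℕ) (hp : p.Prime) (hp2 : p ≠ 2) (j : ℕ)
    (hodd : Odd (a * p ^ n + j)) :
    p ^ n ∣ (ascPochhammer ℕ (a * p ^ n)).coeff j := by
  set N := a * p ^ n with hN
  set S := ZMod (p ^ n)
  rw [← ZMod.natCast_eq_zero_iff]
  have hcast : ((((ascPochhammer ℕ N).coeff j : ℕ)) : S)
      = (ascPochhammer S N).coeff j := by
    rw [← ascPochhammer_map (Nat.castRingHom S) N, coeff_map]
    rfl
  rw [hcast]
  have hNS : ((N : ℕ) : S) = 0 := by
    have : ((p ^ n : ℕ) : S) = 0 := ZMod.natCast_self _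
    rw [hN]
    push_cast
    rw [ZMod.natCast_eq_zero_iff]; exact Dvd.intro_left _ rfl
  -- ∏ (X + C i) = ∏ (X - C i) over S
  set σ : ℕ → ℕ := fun i => if i = 0 then 0 else N - i with hσ
  have hmem : ∀ i, i < N → σ i < N := by
    intro i hi
    by_cases h : i = 0
    · simp only [hσ, h, if_pos rfl]; omega
    · simp only [hσ, if_neg h]; omega
  have hinv : ∀ i, i < N → σ (σ i) = i := by
    intro i hi
    by_cases h : i = 0
    · simp [hσ, h]
    · have h1 : σ i = N - i := by simp only [hσ, if_neg h]
      have h2 : σ i ≠ 0 := by omega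
      simp only [hσ] at h1 h2 ⊢
      rw [h1, if_neg (by omega)]
      omega
  have hcastσ : ∀ i, i < N → ((σ i : ℕ) : S) = -((i : ℕ) : S) := by
    intro i hi
    by_cases h : i = 0
    · simp [hσ, h]
    · have h1 : σ i = N - i := by simp only [hσ, if_neg h]
      rw [h1, Nat.cast_sub (le_of_lt hi), hNS, zero_sub]
  have hprod : (∏ i ∈ range N, (X + C ((i : S)))) = ∏ i ∈ range N, (X - C ((i : S))) := by
    refine Finset.prod_nbij' σ σ ?_ ?_ ?_ ?_ ?_
    · intro i hi; exact mem_range.mpr (hmem i (mem_range.mp hi))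
    · intro i hi; exact mem_range.mpr (hmem i (mem_range.mp hi))
    · intro i hi; exact hinv i (mem_range.mp hi)
    · intro i hi; exact hinv i (mem_range.mp hi)
    · intro i hi
      rw [hcastσ i (mem_range.mp hi), C_neg, sub_neg_eq_add]
  have hA : ascPochhammer S N = ∏ i ∈ range N, (X + C ((i : S))) := aux_asc_prod S N
  -- combine
  have h2 : (2 : S) * (ascPochhammer S N).coeff j = 0 := by
    have := aux_coeff_prod_neg (fun i => ((i : S))) N j
    rw [← hprod, ← hA] at this
    have hneg : ((-1 : S)) ^ (N + j) = -1 := Odd.neg_one_pow hodd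
    rw [hneg] at this
    -- this : coeff = -1 * coeff
    have : (ascPochhammer S N).coeff j + (ascPochhammer S N).coeff j = 0 := by
      nth_rewrite 1 [this]
      ring
    calc (2 : S) * (ascPochhammer S N).coeff j
        = (ascPochhammer S N).coeff j + (ascPochhammer S N).coeff j := by ring
      _ = 0 := this
  have hunit : IsUnit (2 : S) := by
    rw [show ((2 : S)) = ((2 : ℕ) : S) by push_cast; ring]
    rw [ZMod.isUnit_iff_coprime]
    exact Nat.Coprime.pow_right n ((Nat.coprime_primes Nat.prime_two hp).mpr (Ne.symm hp2))
  exact (IsUnit.mul_right_eq_zero hunit).mp h2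

theorem stmt17 (p a n k : ℕ) (hp : p.Prime) (hp5 : 5 ≤ p)
    (ha : 1 ≤ a) (hn : 1 ≤ n) (hgcd : Nat.gcd a p = 1)
    (hkeven : Even k) (hk : k ≤ a * p ^ n) :
    stirlingFirstShift (p ^ n) (a * p ^ n) (a * p ^ n - k) ≡
      stirlingFirst (a * p ^ n) (a * p ^ n - k) [MOD p ^ (2 * n)] := by
  set N := a * p ^ n with hN
  set k' := N - k with hk'
  set R := ZMod (p ^ (2 * n))
  rw [← ZMod.natCast_eq_natCast_iff]
  -- the square-zero element
  have hm2 : ((p ^ n : ℕ) : R) ^ 2 = 0 := by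
    have : (((p ^ (2 * n) : ℕ)) : R) = 0 := ZMod.natCast_self _
    calc ((p ^ n : ℕ) : R) ^ 2 = ((p ^ n * p ^ n : ℕ) : R) := by rw [Nat.cast_mul]; ring
      _ = (((p ^ (2 * n) : ℕ)) : R) := by rw [← pow_add]; ring_nf
      _ = 0 := this
  -- cast of stirlingFirst
  have hRHS : ((stirlingFirst N k' : ℕ) : R) = (ascPochhammer R N).coeff k' := by
    rw [stirlingFirst, ← ascPochhammer_map (Nat.castRingHom R) N, coeff_map]
    rfl
  -- cast of stirlingFirstShift
  have hLHS : ((stirlingFirstShift (p ^ n) N k' : ℕ) : R)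
      = (Polynomial.taylor ((p ^ n : ℕ) : R) (ascPochhammer R N)).coeff k' := by
    rw [stirlingFirstShift]
    have h0 : ((((∏ i ∈ Finset.range N, (X + C (p ^ n + i)) : ℕ[X])).coeff k' : ℕ) : R)
        = ((∏ i ∈ Finset.range N, (X + C (p ^ n + i)) : ℕ[X]).map (Nat.castRingHom R)).coeff k' := by
      rw [coeff_map]; rfl
    rw [h0]
    rw [Polynomial.map_prod]
    rw [taylor_apply, aux_asc_comp]
    congr 1
    apply Finset.prod_congr rfl
    intro i _
    rw [Polynomial.map_add, map_X, map_C]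
    congr 1
    rw [show (Nat.castRingHom R) (p ^ n + i) = (((p ^ n + i : ℕ)) : R) from rfl]
    push_cast
    ring
  rw [hLHS, hRHS, aux_taylor_coeff _ _ hm2]
  -- remains: the correction term vanishes
  have hodd : Odd (N + (k' + 1)) := by
    rw [Nat.odd_iff]
    have hke := Nat.even_iff.mp hkeven
    omega
  obtain ⟨t, ht⟩ := aux_key p a n hp (by omega) (k' + 1) hodd
  have hcoeff : (ascPochhammer R N).coeff (k' + 1) = ((p ^ n * t : ℕ) : R) := by
    rw [← ht, ← ascPochhammer_map (Nat.castRingHom R) N, coeff_map]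
    rfl
  rw [hcoeff]
  have : (((k' + 1 : ℕ)) : R) * ((p ^ n * t : ℕ) : R) * ((p ^ n : ℕ) : R)
      = (((k' + 1) * t : ℕ) : R) * (((p ^ (2 * n)) : ℕ) : R) := by
    rw [← Nat.cast_mul, ← Nat.cast_mul, ← Nat.cast_mul]
    congr 1
    ring
  rw [this, ZMod.natCast_self, mul_zero, add_zero]
end
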